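/- arXiv:2504.21329 — 4 statements merged into one kernel-verified Lean document; each statement's English description precedes it below -/
import Mathlib

section
/- Let (G, h) be a subdivided generic Reeb graph that admits a drawing with zero crossings in which every edge is an xy-monotone curve and every vertex v lies at y-coordinate h(v). Then there exists another zero-crossing drawing of (G, h) in which the vertices appear in the same left-to-right order of x-coordinates, every vertex v lies at y-coordinate h(v), and every edge is drawn as a straight line segment. -/
open Set

/-- A drawing of a Reeb graph `(G, h)`: every vertex `v` is placed at the point
`(x v, h v)` in the plane (distinct vertices at distinct points), and every edge
`{v, w}` of `G` is drawn as the graph of a continuous function of the `y`-coordinate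
over the height interval of its two endpoints; such a curve is a continuous
`y`-monotone curve joining the images of the endpoints (it meets every horizontal
line in at most one point). -/
structure ReebDrawing {V : Type*} (G : SimpleGraph V) (h : V → ℝ) where
  /-- the `x`-coordinate of each vertex -/
  x : V → ℝ
  /-- distinct vertices are mapped to distinct points -/
  inj : Function.Injective fun v => ((x v, h v) : ℝ × ℝ)
  /-- for each edge, the `x`-coordinate of its curve as a function of the height `y` -/
  curve : Sym2 V → ℝ → ℝ
  curve_cont : ∀ e ∈ G.edgeSet, Continuous (curve e)
  curve_end : ∀ v w : V, G.Adj v w → curve s(v, w) (h v) = x v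

namespace ReebDrawing

variable {V : Type*} {G : SimpleGraph V} {h : V → ℝ}

/-- The point of the plane where the vertex `v` is drawn. -/
def pos (D : ReebDrawing G h) (v : V) : ℝ × ℝ := (D.x v, h v)

/-- The set of points of the curve drawn for the edge `{v, w}`. -/
def edgeCurve (D : ReebDrawing G h) (v w : V) : Set (ℝ × ℝ) :=
  {p | p.2 ∈ Set.uIcc (h v) (h w) ∧ p.1 = D.curve s(v, w) p.2}

/-- `p` is a crossing point of the two distinct edges `{v, w}` and `{v', w'}`:
it lies on both curves and is not the image of a shared endpoint. -/
def IsCrossing (D : ReebDrawing G h) (p : ℝ × ℝ) (v w v' w' : V) : Prop :=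
  G.Adj v w ∧ G.Adj v' w' ∧ s(v, w) ≠ s(v', w') ∧
    p ∈ D.edgeCurve v w ∧ p ∈ D.edgeCurve v' w' ∧
    ∀ u : V, (u = v ∨ u = w) → (u = v' ∨ u = w') → p ≠ D.pos u

/-- The set of crossings of a drawing: an unordered pair of (distinct) edges together
with a crossing point of these two edges. -/
def crossingSet (D : ReebDrawing G h) : Set (Sym2 (Sym2 V) × (ℝ × ℝ)) :=
  {q | ∃ v w v' w', q.1 = s(s(v, w), s(v', w')) ∧ D.IsCrossing q.2 v w v' w'}

/-- The number of crossings of a drawing, counted over all pairs of edges. -/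
noncomputable def numCrossings (D : ReebDrawing G h) : ℕ∞ := D.crossingSet.encard

/-- The crossings involving the fixed edge `e₀`: the other edge together with the
crossing point. -/
def edgeCrossings (D : ReebDrawing G h) (e₀ : Sym2 V) : Set (Sym2 V × (ℝ × ℝ)) :=
  {q | ∃ v w v' w', s(v, w) = e₀ ∧ q.1 = s(v', w') ∧ D.IsCrossing q.2 v w v' w'}

/-- The edge `{v, w}` is drawn as a straight line segment. -/
def Straight (D : ReebDrawing G h) (v w : V) : Prop :=
  ∀ y ∈ Set.uIcc (h v) (h w),
    D.curve s(v, w) y = D.x v + (y - h v) * (D.x w - D.x v) / (h w - h v)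

/-- The edge `{v, w}` is drawn as an `xy`-monotone curve: besides meeting every
horizontal line at most once (which holds by construction), it meets every vertical
line at most once. -/
def XYMonotone (D : ReebDrawing G h) (v w : V) : Prop :=
  Set.InjOn (D.curve s(v, w)) (Set.uIcc (h v) (h w))

/-- Edge `{v, w}` is (strictly) left of edge `{v', w'}`: at every height in the
interior of the common `y`-interval, the point of the first curve has strictly
smaller `x`-coordinate. -/
def LeftOf (D : ReebDrawing G h) (v w v' w' : V) : Prop :=
  ∀ y ∈ interior (Set.uIcc (h v) (h w) ∩ Set.uIcc (h v') (h w')),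
    D.curve s(v, w) y < D.curve s(v', w') y

end ReebDrawing

/-- The Reeb graph crossing number: the minimum number of crossings over all
drawings of `(G, h)`. -/
noncomputable def RGCN {V : Type*} (G : SimpleGraph V) (h : V → ℝ) : ℕ∞ :=
  ⨅ D : ReebDrawing G h, D.numCrossings

/-- The number of neighbours of `v` of strictly smaller height. -/
noncomputable def downDeg {V : Type*} (G : SimpleGraph V) (h : V → ℝ) (v : V) : ℕ :=
  {w | G.Adj v w ∧ h w < h v}.ncard

/-- The number of neighbours of `v` of strictly larger height. -/
noncomputable def upDeg {V : Type*} (G : SimpleGraph V) (h : V → ℝ) (v : V) : ℕ :=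
  {w | G.Adj v w ∧ h v < h w}.ncard

/-- A generic Reeb graph: all vertex heights are distinct, every vertex has degree
`1` or `3`, and every vertex has at most `2` lower and at most `2` higher neighbours. -/
def IsGenericReeb {V : Type*} (G : SimpleGraph V) (h : V → ℝ) : Prop :=
  Function.Injective h ∧
  (∀ v : V, (G.neighborSet v).ncard = 1 ∨ (G.neighborSet v).ncard = 3) ∧
  (∀ v : V, downDeg G h v ≤ 2 ∧ upDeg G h v ≤ 2)

/-- A subdivided Reeb graph: every edge joins vertices at consecutive levels (distinct
heights with no vertex height strictly in between), every vertex has degree at most `3`,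
with at most `2` lower and at most `2` higher neighbours. -/
def IsSubdividedReeb {V : Type*} (G : SimpleGraph V) (h : V → ℝ) : Prop :=
  (∀ v w : V, G.Adj v w → h v ≠ h w ∧
    ∀ u : V, h u ∉ Set.Ioo (min (h v) (h w)) (max (h v) (h w))) ∧
  (∀ v : V, (G.neighborSet v).ncard ≤ 3 ∧ downDeg G h v ≤ 2 ∧ upDeg G h v ≤ 2)

/-- `G` is the cycle graph on the enumeration `e` of its vertex set: adjacency holds
exactly between cyclically consecutive vertices. -/
def IsCycleEnum {V : Type*} {n : ℕ} (G : SimpleGraph V) (e : Fin n ≃ V) : Prop :=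
  ∀ i j : Fin n, G.Adj (e i) (e j) ↔ ((i.val + 1) % n = j.val ∨ (j.val + 1) % n = i.val)

/-- A caterpillar: a tree together with a central path (the spine) such that every
vertex is on the spine or adjacent to a spine vertex. -/
def IsCaterpillar {V : Type*} (G : SimpleGraph V) : Prop :=
  G.IsTree ∧ ∃ (n : ℕ) (s : Fin n → V),
    Function.Injective s ∧
    (∀ (i : ℕ) (hi : i + 1 < n), G.Adj (s ⟨i, Nat.lt_of_succ_lt hi⟩) (s ⟨i + 1, hi⟩)) ∧
    (∀ v : V, v ∈ Set.range s ∨ ∃ i : Fin n, G.Adj v (s i))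

/-! ### Auxiliary material for the straightening theorem -/

/-- The straight-line interpolation between the endpoints of an edge. -/
noncomputable def straightLine {V : Type*} (h : V → ℝ) (x : V → ℝ) (v w : V) : ℝ → ℝ :=
  fun y => ((h w - y) * x v + (y - h v) * x w) / (h w - h v)

lemma straightLine_symm {V : Type*} (h : V → ℝ) (x : V → ℝ) (v w : V) :
    straightLine h x v w = straightLine h x w v := by
  funext y
  unfold straightLine
  rw [← neg_div_neg_eq]
  congr 1 <;> ring

namespace ReebDrawing

variable {V : Type*} {G : SimpleGraph V} {h : V → ℝ}

lemma edgeCurve_comm (D : ReebDrawing G h) (v w : V) :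
    D.edgeCurve v w = D.edgeCurve w v := by
  have h1 : s(v, w) = s(w, v) := Sym2.eq_swap
  unfold ReebDrawing.edgeCurve
  rw [h1, Set.uIcc_comm]

lemma IsCrossing.symm_edges {D : ReebDrawing G h} {p : ℝ × ℝ} {v w v' w' : V}
    (hc : D.IsCrossing p v w v' w') : D.IsCrossing p v' w' v w := by
  obtain ⟨a1, a2, a3, a4, a5, a6⟩ := hc
  exact ⟨a2, a1, a3.symm, a5, a4, fun u h1 h2 => a6 u h2 h1⟩

lemma IsCrossing.swap_left {D : ReebDrawing G h} {p : ℝ × ℝ} {v w v' w' : V}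
    (hc : D.IsCrossing p v w v' w') : D.IsCrossing p w v v' w' := by
  obtain ⟨a1, a2, a3, a4, a5, a6⟩ := hc
  refine ⟨a1.symm, a2, ?_, ?_, a5, fun u h1 h2 => a6 u h1.symm h2⟩
  · intro hcon
    exact a3 ((Sym2.eq_swap (a := v) (b := w)).trans hcon)
  · rw [← D.edgeCurve_comm v w]
    exact a4

lemma IsCrossing.swap_right {D : ReebDrawing G h} {p : ℝ × ℝ} {v w v' w' : V}
    (hc : D.IsCrossing p v w v' w') : D.IsCrossing p v w w' v' :=
  hc.symm_edges.swap_left.symm_edges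

end ReebDrawing

/-- If two edges of the original drawing have matching endpoint heights and their
endpoints appear in opposite horizontal order at the bottom and at the top, then the
original drawing has a crossing, by the intermediate value theorem. -/
lemma no_cross_aux {V : Type*} {G : SimpleGraph V} {h : V → ℝ} (D : ReebDrawing G h)
    (hplanar : D.crossingSet = ∅) {v w v' w' : V}
    (hadj : G.Adj v w) (hadj' : G.Adj v' w') (hne : s(v, w) ≠ s(v', w'))
    (ha : h v = h v') (hb : h w = h w') (hab : h v < h w)
    (h1 : D.x v < D.x v') (h2 : D.x w' < D.x w) : False := by
  set g : ℝ → ℝ := fun y => D.curve s(v', w') y - D.curve s(v, w) y with hg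
  have hcont : Continuous g :=
    (D.curve_cont _ (G.mem_edgeSet.2 hadj')).sub (D.curve_cont _ (G.mem_edgeSet.2 hadj))
  have hga : g (h v) = D.x v' - D.x v := by
    have e1 : D.curve s(v, w) (h v) = D.x v := D.curve_end v w hadj
    have e2 : D.curve s(v', w') (h v) = D.x v' := by
      rw [ha]; exact D.curve_end v' w' hadj'
    simp [hg, e1, e2]
  have hgb : g (h w) = D.x w' - D.x w := by
    have e1 : D.curve s(v, w) (h w) = D.x w := by
      rw [show s(v, w) = s(w, v) from Sym2.eq_swap]
      exact D.curve_end w v hadj.symm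
    have e2 : D.curve s(v', w') (h w) = D.x w' := by
      rw [hb, show s(v', w') = s(w', v') from Sym2.eq_swap]
      exact D.curve_end w' v' hadj'.symm
    simp [hg, e1, e2]
  have h0 : (0:ℝ) ∈ Set.Ioo (g (h w)) (g (h v)) := by
    rw [hga, hgb]
    constructor <;> simp <;> linarith
  obtain ⟨y0, hy0, hgy0⟩ := intermediate_value_Ioo' hab.le hcont.continuousOn h0
  have hcc : D.curve s(v, w) y0 = D.curve s(v', w') y0 := by
    have := hgy0
    simp only [hg] at this
    linarith
  have hmem : ((s(s(v, w), s(v', w')), ((D.curve s(v, w) y0, y0) : ℝ × ℝ))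
      : Sym2 (Sym2 V) × (ℝ × ℝ)) ∈ D.crossingSet := by
    refine ⟨v, w, v', w', rfl, hadj, hadj', hne, ?_, ?_, ?_⟩
    · exact ⟨Set.Icc_subset_uIcc (Set.Ioo_subset_Icc_self hy0), rfl⟩
    · refine ⟨?_, hcc⟩
      show y0 ∈ Set.uIcc (h v') (h w')
      rw [← ha, ← hb]
      exact Set.Icc_subset_uIcc (Set.Ioo_subset_Icc_self hy0)
    · intro u hu _ heq
      have hyu : y0 = h u := congrArg Prod.snd heq
      rcases hu with rfl | rfl
      · exact absurd hyu.symm (ne_of_lt hy0.1)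
      · exact absurd hyu.symm (ne_of_gt hy0.2)
  rw [hplanar] at hmem
  exact hmem

/-- A crossing of a straight-line drawing of a subdivided Reeb graph (with orientations
normalized) yields a crossing of the original drawing. -/
lemma straight_no_cross {V : Type*} {G : SimpleGraph V} {h : V → ℝ}
    (hsub : IsSubdividedReeb G h) (D : ReebDrawing G h) (hplanar : D.crossingSet = ∅)
    (D' : ReebDrawing G h) (hx : D'.x = D.x)
    (hstraight : ∀ v w : V, G.Adj v w → D'.Straight v w)
    {p : ℝ × ℝ} {v w v' w' : V} (hc : D'.IsCrossing p v w v' w')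
    (h1 : h v < h w) (h2 : h v' < h w') : False := by
  obtain ⟨hadj, hadj', hne, hm, hm', hsh⟩ := hc
  obtain ⟨hy, hp⟩ := hm
  obtain ⟨hy', hp'⟩ := hm'
  rw [Set.uIcc_of_le h1.le] at hy
  rw [Set.uIcc_of_le h2.le] at hy'
  have hba : h w - h v ≠ 0 := sub_ne_zero.2 (Ne.symm h1.ne)
  have hba' : h w' - h v' ≠ 0 := sub_ne_zero.2 (Ne.symm h2.ne)
  have hcv : ∀ y ∈ Set.Icc (h v) (h w), D'.curve s(v, w) y
      = D'.x v + (y - h v) * (D'.x w - D'.x v) / (h w - h v) := fun y hy2 =>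
    hstraight v w hadj y (by rw [Set.uIcc_of_le h1.le]; exact hy2)
  have hcv' : ∀ y ∈ Set.Icc (h v') (h w'), D'.curve s(v', w') y
      = D'.x v' + (y - h v') * (D'.x w' - D'.x v') / (h w' - h v') := fun y hy2 =>
    hstraight v' w' hadj' y (by rw [Set.uIcc_of_le h2.le]; exact hy2)
  have hA : D'.curve s(v, w) (h v) = D'.x v := by
    rw [hcv (h v) (Set.left_mem_Icc.2 h1.le)]; simp
  have hB : D'.curve s(v, w) (h w) = D'.x w := by
    rw [hcv (h w) (Set.right_mem_Icc.2 h1.le)]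
    field_simp
    ring
  have hA' : D'.curve s(v', w') (h v') = D'.x v' := by
    rw [hcv' (h v') (Set.left_mem_Icc.2 h2.le)]; simp
  have hB' : D'.curve s(v', w') (h w') = D'.x w' := by
    rw [hcv' (h w') (Set.right_mem_Icc.2 h2.le)]
    field_simp
    ring
  have L1 : ∀ u : V, h u ∉ Set.Ioo (h v) (h w) := by
    have := (hsub.1 v w hadj).2
    simpa [min_eq_left h1.le, max_eq_right h1.le] using this
  have L2 : ∀ u : V, h u ∉ Set.Ioo (h v') (h w') := by
    have := (hsub.1 v' w' hadj').2
    simpa [min_eq_left h2.le, max_eq_right h2.le] using this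
  rcases le_or_gt (h w) (h v') with hcase | hcase
  · -- the two slabs touch at a single height: matched endpoint, not a crossing
    have e1 : p.2 = h w := le_antisymm hy.2 (le_trans hcase hy'.1)
    have e2 : p.2 = h v' := le_antisymm (hy.2.trans hcase) hy'.1
    have q1 : p.1 = D'.x w := by rw [hp, e1, hB]
    have q2 : p.1 = D'.x v' := by rw [hp', e2, hA']
    have hwv : w = v' := D'.inj (show ((D'.x w, h w) : ℝ × ℝ) = (D'.x v', h v') by
      rw [← q1, ← q2, ← e1, ← e2])
    refine hsh w (Or.inr rfl) (Or.inl hwv) ?_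
    show p = (D'.x w, h w)
    rw [← q1, ← e1]
  rcases le_or_gt (h w') (h v) with hcase2 | hcase2
  · have e1 : p.2 = h v := le_antisymm (hy'.2.trans hcase2) hy.1
    have e2 : p.2 = h w' := le_antisymm hy'.2 (le_trans hcase2 hy.1)
    have q1 : p.1 = D'.x v := by rw [hp, e1, hA]
    have q2 : p.1 = D'.x w' := by rw [hp', e2, hB']
    have hvw : v = w' := D'.inj (show ((D'.x v, h v) : ℝ × ℝ) = (D'.x w', h w') by
      rw [← q1, ← q2, ← e1, ← e2])
    refine hsh v (Or.inl rfl) (Or.inr hvw) ?_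
    show p = (D'.x v, h v)
    rw [← q1, ← e1]
  -- now the two slabs coincide
  have ea : h v = h v' := by
    have hle1 : h v' ≤ h v := by
      by_contra hcon
      push_neg at hcon
      exact L1 v' ⟨hcon, hcase⟩
    have hle2 : h v ≤ h v' := by
      by_contra hcon
      push_neg at hcon
      exact L2 v ⟨hcon, hcase2⟩
    exact le_antisymm hle2 hle1
  have eb : h w = h w' := by
    have hle1 : h w' ≤ h w := by
      by_contra hcon
      push_neg at hcon
      exact L2 w ⟨hcase, hcon⟩
    have hle2 : h w ≤ h w' := by
      by_contra hcon
      push_neg at hcon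
      exact L1 w' ⟨hcase2, hcon⟩
    exact le_antisymm hle2 hle1
  rcases eq_or_lt_of_le hy.1 with eA | gA
  · -- the crossing point is at the bottom of the slab: shared endpoint
    have e2 : p.2 = h v' := eA.symm.trans ea
    have q1 : p.1 = D'.x v := by rw [hp, ← eA, hA]
    have q2 : p.1 = D'.x v' := by rw [hp', e2, hA']
    have hvv : v = v' := D'.inj (show ((D'.x v, h v) : ℝ × ℝ) = (D'.x v', h v') by
      rw [← q1, ← q2, eA, ← e2])
    refine hsh v (Or.inl rfl) (Or.inl hvv) ?_
    show p = (D'.x v, h v)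
    rw [← q1, eA]
  rcases eq_or_lt_of_le hy.2 with eB | gB
  · -- the crossing point is at the top of the slab: shared endpoint
    have e2 : p.2 = h w' := eB.trans eb
    have q1 : p.1 = D'.x w := by rw [hp, eB, hB]
    have q2 : p.1 = D'.x w' := by rw [hp', e2, hB']
    have hww : w = w' := D'.inj (show ((D'.x w, h w) : ℝ × ℝ) = (D'.x w', h w') by
      rw [← q1, ← q2, ← eB, ← e2])
    refine hsh w (Or.inr rfl) (Or.inr hww) ?_
    show p = (D'.x w, h w)
    rw [← q1, ← eB]
  -- interior crossing of the two straight segments of the same slab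
  have hq1 : p.1 = D'.x v + (p.2 - h v) * (D'.x w - D'.x v) / (h w - h v) := by
    rw [hp]; exact hcv p.2 hy
  have hq2 : p.1 = D'.x v' + (p.2 - h v') * (D'.x w' - D'.x v') / (h w' - h v') := by
    rw [hp']; exact hcv' p.2 hy'
  rw [← ea, ← eb] at hq2
  have h5 := hq1.symm.trans hq2
  have key : (D'.x v' - D'.x v) * (h w - p.2) + (D'.x w' - D'.x w) * (p.2 - h v) = 0 := by
    field_simp at h5
    linear_combination -h5
  have hby : 0 < h w - p.2 := sub_pos.2 gB
  have hay : 0 < p.2 - h v := sub_pos.2 gA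
  rcases lt_trichotomy (D'.x v) (D'.x v') with hd | hd | hd
  · have he : D'.x w' < D'.x w := by
      by_contra hcon
      push_neg at hcon
      have t1 : 0 < (D'.x v' - D'.x v) * (h w - p.2) := mul_pos (sub_pos.2 hd) hby
      have t2 : 0 ≤ (D'.x w' - D'.x w) * (p.2 - h v) :=
        mul_nonneg (sub_nonneg.2 hcon) hay.le
      linarith
    rw [hx] at hd he
    exact no_cross_aux D hplanar hadj hadj' hne ea eb h1 hd he
  · have he : D'.x w = D'.x w' := by
      have h7 : (D'.x w' - D'.x w) * (p.2 - h v) = 0 := by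
        rw [hd] at key
        linear_combination key
      rcases mul_eq_zero.1 h7 with h8 | h8
      · linarith [sub_eq_zero.1 h8]
      · exact absurd h8 (ne_of_gt hay)
    have hvv : v = v' := D'.inj (show ((D'.x v, h v) : ℝ × ℝ) = (D'.x v', h v') by
      rw [hd, ea])
    have hww : w = w' := D'.inj (show ((D'.x w, h w) : ℝ × ℝ) = (D'.x w', h w') by
      rw [he, eb])
    exact hne (by rw [hvv, hww])
  · have he : D'.x w < D'.x w' := by
      by_contra hcon
      push_neg at hcon
      have t1 : (D'.x v' - D'.x v) * (h w - p.2) < 0 :=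
        mul_neg_of_neg_of_pos (sub_neg.2 hd) hby
      have t2 : (D'.x w' - D'.x w) * (p.2 - h v) ≤ 0 :=
        mul_nonpos_of_nonpos_of_nonneg (sub_nonpos.2 hcon) hay.le
      linarith
    rw [hx] at hd he
    exact no_cross_aux D hplanar hadj' hadj hne.symm ea.symm eb.symm h2 hd he

/-- If a subdivided generic Reeb graph `(G, h)` admits a drawing with
zero crossings in which every edge is an `xy`-monotone curve (every vertex lies at
`y`-coordinate `h v` by definition of a drawing), then it admits a zero-crossing
drawing in which the vertices appear in the same left-to-right order of
`x`-coordinates, and every edge is drawn as a straight line segment. -/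
theorem planar_reeb_drawing_straightening
    {V : Type*} [Fintype V] (G : SimpleGraph V) (h : V → ℝ)
    (hsub : IsSubdividedReeb G h)
    (D : ReebDrawing G h)
    (hplanar : D.crossingSet = ∅)
    (hxy : ∀ v w : V, G.Adj v w → D.XYMonotone v w) :
    ∃ D' : ReebDrawing G h,
      D'.crossingSet = ∅ ∧
      (∀ v w : V, D.x v < D.x w → D'.x v < D'.x w) ∧
      (∀ v w : V, G.Adj v w → D'.Straight v w) := by
  have hhe : ∀ v w : V, G.Adj v w → h w - h v ≠ 0 := fun v w hvw =>
    sub_ne_zero.2 (Ne.symm (hsub.1 v w hvw).1)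
  let D' : ReebDrawing G h :=
    { x := D.x
      inj := D.inj
      curve := fun e => Sym2.lift ⟨straightLine h D.x, straightLine_symm h D.x⟩ e
      curve_cont := by
        intro e _
        induction e using Sym2.ind with
        | _ v w =>
          simp only [Sym2.lift_mk]
          unfold straightLine
          fun_prop
      curve_end := by
        intro v w hvw
        have hne := hhe v w hvw
        simp only [Sym2.lift_mk]
        unfold straightLine
        field_simp
        ring }
  have hstraight : ∀ v w : V, G.Adj v w → D'.Straight v w := by
    intro v w hvw y _
    have hne := hhe v w hvw
    show Sym2.lift ⟨straightLine h D.x, straightLine_symm h D.x⟩ s(v, w) y = _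
    rw [Sym2.lift_mk]
    unfold straightLine
    field_simp
    ring
  refine ⟨D', ?_, fun v w hlt => hlt, hstraight⟩
  rw [Set.eq_empty_iff_forall_notMem]
  rintro ⟨e, p⟩ ⟨v, w, v', w', -, hc⟩
  have hA : G.Adj v w := hc.1
  have hA' : G.Adj v' w' := hc.2.1
  rcases ((hsub.1 v w hA).1).lt_or_gt with h1 | h1 <;>
    rcases ((hsub.1 v' w' hA').1).lt_or_gt with h2 | h2
  · exact straight_no_cross hsub D hplanar D' rfl hstraight hc h1 h2
  · exact straight_no_cross hsub D hplanar D' rfl hstraight hc.swap_right h1 h2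
  · exact straight_no_cross hsub D hplanar D' rfl hstraight hc.swap_left h1 h2
  · exact straight_no_cross hsub D hplanar D' rfl hstraight hc.swap_left.swap_right h1 h2
end

section
/- Let (G, h) be a Reeb graph such that G is a caterpillar in which every vertex has degree at most 3. Then (G, h) admits a drawing with zero crossings. -/
open Set

lemma mem_uIcc_of_mul_nonpos {z b c : ℝ} (h : (z - b) * (z - c) ≤ 0) : z ∈ Set.uIcc b c := by
  rcases mul_nonpos_iff.1 h with ⟨h1, h2⟩ | ⟨h1, h2⟩ <;>
    rw [Set.mem_uIcc] <;> [exact Or.inl ⟨by linarith, by linarith⟩;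
      exact Or.inr ⟨by linarith, by linarith⟩]

lemma mul_nonpos_of_mem_uIcc {z b c : ℝ} (h : z ∈ Set.uIcc b c) : (z - b) * (z - c) ≤ 0 := by
  rcases Set.mem_uIcc.1 h with ⟨h1, h2⟩ | ⟨h1, h2⟩ <;> nlinarith

lemma affine_mem_uIcc {hv hw xv xw y : ℝ} (hne : hv ≠ hw) (hy : y ∈ Set.uIcc hv hw) :
    xv + (y - hv) * ((xw - xv) / (hw - hv)) ∈ Set.uIcc xv xw := by
  set a := (xw - xv) / (hw - hv) with ha
  have hd : hw - hv ≠ 0 := sub_ne_zero.2 (Ne.symm hne)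
  have hxw : xw - xv = (hw - hv) * a := by rw [ha]; field_simp
  apply mem_uIcc_of_mul_nonpos
  have h1 : xv + (y - hv) * a - xv = (y - hv) * a := by ring
  have h2 : xv + (y - hv) * a - xw = (y - hw) * a := by linear_combination (-1 : ℝ) * hxw
  rw [h1, h2]
  have := mul_nonpos_of_mem_uIcc hy
  nlinarith [sq_nonneg a]

lemma affine_endpoint {hv hw xv xw y : ℝ} (hne : hv ≠ hw) (hxne : xv ≠ xw)
    (heq : xv + (y - hv) * ((xw - xv) / (hw - hv)) = xw) : y = hw := by
  have hd : hw - hv ≠ 0 := sub_ne_zero.2 (Ne.symm hne)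
  have ha : (xw - xv) / (hw - hv) ≠ 0 := div_ne_zero (sub_ne_zero.2 (Ne.symm hxne)) hd
  have hxw : xw - xv = (hw - hv) * ((xw - xv) / (hw - hv)) := by field_simp
  have : (y - hw) * ((xw - xv) / (hw - hv)) = 0 := by
    have : (y - hv) * ((xw - xv) / (hw - hv)) = xw - xv := by linarith
    rw [hxw] at this; nlinarith [this]
  rcases mul_eq_zero.1 this with h | h
  · linarith [sub_eq_zero.1 h]
  · exact absurd h ha

lemma spine_walk {V : Type*} (G : SimpleGraph V) {n : ℕ} (s : Fin n → V)
    (hsinj : Function.Injective s)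
    (hsadj : ∀ (i : ℕ) (hi : i + 1 < n), G.Adj (s ⟨i, Nat.lt_of_succ_lt hi⟩) (s ⟨i + 1, hi⟩)) :
    ∀ (d i : ℕ) (h : i + d < n), ∃ p : G.Walk (s ⟨i, by omega⟩) (s ⟨i + d, h⟩),
      p.IsPath ∧ p.length = d ∧
      ∀ v ∈ p.support, ∃ (m : ℕ) (hm : m < n), i ≤ m ∧ m ≤ i + d ∧ v = s ⟨m, hm⟩ := by
  intro d
  induction d with
  | zero =>
    intro i h
    refine ⟨SimpleGraph.Walk.nil, SimpleGraph.Walk.IsPath.nil, rfl, ?_⟩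
    intro v hv
    simp only [SimpleGraph.Walk.support_nil, List.mem_singleton] at hv
    exact ⟨i, by omega, le_refl _, by omega, by simp [hv]⟩
  | succ d ih =>
    intro i h
    obtain ⟨p, hp, hlen, hsup⟩ := ih i (by omega)
    have hadj : G.Adj (s ⟨i + d, by omega⟩) (s ⟨i + d + 1, by omega⟩) := hsadj (i + d) (by omega)
    have hnotmem : s ⟨i + d + 1, by omega⟩ ∉ p.support := by
      intro hmem
      obtain ⟨m, hm, hm1, hm2, hm3⟩ := hsup _ hmem
      have := hsinj hm3.symm
      have : m = i + d + 1 := congrArg Fin.val this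
      omega
    refine ⟨p.concat hadj, ?_, ?_, ?_⟩
    · rw [SimpleGraph.Walk.isPath_def, SimpleGraph.Walk.support_concat,
        List.nodup_append]
      exact ⟨hp.support_nodup, List.nodup_singleton _, by
        intro a ha b hb hh; rw [List.mem_singleton] at hb; subst hh; subst hb; exact hnotmem ha⟩
    · rw [SimpleGraph.Walk.length_concat, hlen]
    · intro v hv
      rw [SimpleGraph.Walk.support_concat, List.mem_append] at hv
      rcases hv with hv | hv
      · obtain ⟨m, hm, hm1, hm2, hm3⟩ := hsup _ hv
        exact ⟨m, hm, hm1, by omega, hm3⟩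
      · simp only [List.mem_singleton] at hv
        exact ⟨i + d + 1, by omega, by omega, le_refl _, hv⟩

section Tree
variable {V : Type*} {G : SimpleGraph V} {n : ℕ} {s : Fin n → V}

lemma spine_consec_aux (htree : G.IsTree) (hsinj : Function.Injective s)
    (hsadj : ∀ (i : ℕ) (hi : i + 1 < n), G.Adj (s ⟨i, Nat.lt_of_succ_lt hi⟩) (s ⟨i + 1, hi⟩))
    (i j : Fin n) (hij : (i : ℕ) < j) (hadj : G.Adj (s i) (s j)) : (i : ℕ) + 1 = j := by
  set d : ℕ := (j : ℕ) - i with hd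
  have hd1 : 1 ≤ d := by omega
  have hlt : (i : ℕ) + d < n := by omega
  obtain ⟨p, hp, hlen, -⟩ := spine_walk G s hsinj hsadj d i hlt
  have hj : (⟨(i : ℕ) + d, hlt⟩ : Fin n) = j := Fin.ext (by simp; omega)
  have hi : (⟨(i : ℕ), by omega⟩ : Fin n) = i := Fin.ext rfl
  let p' : G.Walk (s i) (s j) := p.copy (congrArg s hi) (congrArg s hj)
  have hp' : p'.IsPath := by simpa [p'] using hp
  let q : G.Walk (s i) (s j) := SimpleGraph.Walk.cons hadj SimpleGraph.Walk.nil
  have hq : q.IsPath := by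
    simp only [q, SimpleGraph.Walk.isPath_def, SimpleGraph.Walk.support_cons,
      SimpleGraph.Walk.support_nil]
    simp [hadj.ne]
  obtain ⟨P, -, huniq⟩ := htree.existsUnique_path (s i) (s j)
  have := (huniq p' hp').trans (huniq q hq).symm
  have hlen' : p'.length = q.length := by rw [this]
  simp only [p', q, SimpleGraph.Walk.length_copy, SimpleGraph.Walk.length_cons,
    SimpleGraph.Walk.length_nil, hlen] at hlen'
  omega

lemma spine_consec (htree : G.IsTree) (hsinj : Function.Injective s)
    (hsadj : ∀ (i : ℕ) (hi : i + 1 < n), G.Adj (s ⟨i, Nat.lt_of_succ_lt hi⟩) (s ⟨i + 1, hi⟩))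
    (i j : Fin n) (hadj : G.Adj (s i) (s j)) : (i : ℕ) + 1 = j ∨ (j : ℕ) + 1 = i := by
  rcases lt_trichotomy (i : ℕ) (j : ℕ) with hlt | heq | hgt
  · exact Or.inl (spine_consec_aux htree hsinj hsadj i j hlt hadj)
  · exact absurd (hsinj (congrArg s (Fin.ext heq)) ▸ hadj) (by
      have : i = j := Fin.ext heq
      subst this; exact G.irrefl)
  · exact Or.inr (spine_consec_aux htree hsinj hsadj j i hgt hadj.symm)

lemma leaf_unique_aux (htree : G.IsTree) (hsinj : Function.Injective s)
    (hsadj : ∀ (i : ℕ) (hi : i + 1 < n), G.Adj (s ⟨i, Nat.lt_of_succ_lt hi⟩) (s ⟨i + 1, hi⟩))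
    {v : V} (hv : v ∉ Set.range s) (i j : Fin n) (hij : (i : ℕ) < j)
    (h1 : G.Adj v (s i)) (h2 : G.Adj v (s j)) : False := by
  set d : ℕ := (j : ℕ) - i with hd
  have hlt : (i : ℕ) + d < n := by omega
  obtain ⟨p, hp, hlen, hsup⟩ := spine_walk G s hsinj hsadj d i hlt
  have hj : (⟨(i : ℕ) + d, hlt⟩ : Fin n) = j := Fin.ext (by simp; omega)
  have hi : (⟨(i : ℕ), by omega⟩ : Fin n) = i := Fin.ext rfl
  let p' : G.Walk (s i) (s j) := p.copy (congrArg s hi) (congrArg s hj)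
  have hp' : p'.IsPath := by simpa [p'] using hp
  let q : G.Walk (s i) (s j) := SimpleGraph.Walk.cons h1.symm (SimpleGraph.Walk.cons h2 SimpleGraph.Walk.nil)
  have hq : q.IsPath := by
    simp only [q, SimpleGraph.Walk.isPath_def, SimpleGraph.Walk.support_cons,
      SimpleGraph.Walk.support_nil]
    have hsij : s i ≠ s j := fun hh => by
      have := congrArg Fin.val (hsinj hh); omega
    have hvi : s i ≠ v := fun hh => hv ⟨i, hh⟩
    have hvj : v ≠ s j := fun hh => hv ⟨j, hh.symm⟩
    simp [hsij, hvi, hvj]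
  obtain ⟨P, -, huniq⟩ := htree.existsUnique_path (s i) (s j)
  have heqw := (huniq p' hp').trans (huniq q hq).symm
  have hvmem : v ∈ p'.support := by
    rw [heqw]; simp [q]
  have : v ∈ p.support := by simpa [p'] using hvmem
  obtain ⟨m, hm, -, -, hm3⟩ := hsup _ this
  exact hv ⟨⟨m, hm⟩, hm3.symm⟩

lemma leaf_unique (htree : G.IsTree) (hsinj : Function.Injective s)
    (hsadj : ∀ (i : ℕ) (hi : i + 1 < n), G.Adj (s ⟨i, Nat.lt_of_succ_lt hi⟩) (s ⟨i + 1, hi⟩))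
    {v : V} (hv : v ∉ Set.range s) (i j : Fin n)
    (h1 : G.Adj v (s i)) (h2 : G.Adj v (s j)) : i = j := by
  rcases lt_trichotomy (i : ℕ) (j : ℕ) with hlt | heq | hgt
  · exact absurd (leaf_unique_aux htree hsinj hsadj hv i j hlt h1 h2) (fun h => h)
  · exact Fin.ext heq
  · exact absurd (leaf_unique_aux htree hsinj hsadj hv j i hgt h2 h1) (fun h => h)

lemma no_leaf_leaf_aux (htree : G.IsTree) (hsinj : Function.Injective s)
    (hsadj : ∀ (i : ℕ) (hi : i + 1 < n), G.Adj (s ⟨i, Nat.lt_of_succ_lt hi⟩) (s ⟨i + 1, hi⟩))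
    {v w : V} (hv : v ∉ Set.range s) (hw : w ∉ Set.range s)
    (i j : Fin n) (hij : (i : ℕ) < j) (h1 : G.Adj v (s i)) (h2 : G.Adj w (s j))
    (hadj : G.Adj v w) : False := by
  set d : ℕ := (j : ℕ) - i with hd
  have hlt : (i : ℕ) + d < n := by omega
  obtain ⟨p, hp, hlen, hsup⟩ := spine_walk G s hsinj hsadj d i hlt
  have hj : (⟨(i : ℕ) + d, hlt⟩ : Fin n) = j := Fin.ext (by simp; omega)
  have hi : (⟨(i : ℕ), by omega⟩ : Fin n) = i := Fin.ext rfl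
  let p' : G.Walk (s i) (s j) := p.copy (congrArg s hi) (congrArg s hj)
  have hp' : p'.IsPath := by simpa [p'] using hp
  let q : G.Walk (s i) (s j) := SimpleGraph.Walk.cons h1.symm
    (SimpleGraph.Walk.cons hadj (SimpleGraph.Walk.cons h2 SimpleGraph.Walk.nil))
  have hq : q.IsPath := by
    simp only [q, SimpleGraph.Walk.isPath_def, SimpleGraph.Walk.support_cons,
      SimpleGraph.Walk.support_nil]
    have hsij : s i ≠ s j := fun hh => by
      have := congrArg Fin.val (hsinj hh); omega
    have h3 : s i ≠ v := fun hh => hv ⟨i, hh⟩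
    have h4 : s i ≠ w := fun hh => hw ⟨i, hh⟩
    have h5 : v ≠ s j := fun hh => hv ⟨j, hh.symm⟩
    have h6 : w ≠ s j := fun hh => hw ⟨j, hh.symm⟩
    simp [hsij, h3, h4, h5, h6, hadj.ne]
  obtain ⟨P, -, huniq⟩ := htree.existsUnique_path (s i) (s j)
  have heqw := (huniq p' hp').trans (huniq q hq).symm
  have hvmem : v ∈ p'.support := by rw [heqw]; simp [q]
  have : v ∈ p.support := by simpa [p'] using hvmem
  obtain ⟨m, hm, -, -, hm3⟩ := hsup _ this
  exact hv ⟨⟨m, hm⟩, hm3.symm⟩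

lemma no_leaf_leaf (htree : G.IsTree) (hsinj : Function.Injective s)
    (hsadj : ∀ (i : ℕ) (hi : i + 1 < n), G.Adj (s ⟨i, Nat.lt_of_succ_lt hi⟩) (s ⟨i + 1, hi⟩))
    {v w : V} (hv : v ∉ Set.range s) (hw : w ∉ Set.range s)
    (i j : Fin n) (h1 : G.Adj v (s i)) (h2 : G.Adj w (s j)) (hadj : G.Adj v w) : False := by
  rcases lt_trichotomy (i : ℕ) (j : ℕ) with hlt | heq | hgt
  · exact no_leaf_leaf_aux htree hsinj hsadj hv hw i j hlt h1 h2 hadj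
  · have hij : i = j := Fin.ext heq
    subst hij
    let q1 : G.Walk v (s i) := SimpleGraph.Walk.cons h1 SimpleGraph.Walk.nil
    let q2 : G.Walk v (s i) :=
      SimpleGraph.Walk.cons hadj (SimpleGraph.Walk.cons h2 SimpleGraph.Walk.nil)
    have hq1 : q1.IsPath := by
      simp only [q1, SimpleGraph.Walk.isPath_def, SimpleGraph.Walk.support_cons,
        SimpleGraph.Walk.support_nil]
      simp [h1.ne]
    have hq2 : q2.IsPath := by
      simp only [q2, SimpleGraph.Walk.isPath_def, SimpleGraph.Walk.support_cons,
        SimpleGraph.Walk.support_nil]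
      have h3 : v ≠ s i := fun hh => hv ⟨i, hh.symm⟩
      have h4 : w ≠ s i := fun hh => hw ⟨i, hh.symm⟩
      simp [hadj.ne, h3, h4]
    obtain ⟨P, -, huniq⟩ := htree.existsUnique_path v (s i)
    have heqw := (huniq q1 hq1).trans (huniq q2 hq2).symm
    have : q1.length = q2.length := by rw [heqw]
    simp [q1, q2] at this
  · exact no_leaf_leaf_aux htree hsinj hsadj hw hv j i hgt h2 h1 hadj.symm

end Tree

section Main
variable {V : Type*} [Fintype V] (G : SimpleGraph V) (h : V → ℝ)

theorem caterpillar_reeb_graph_planar'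
    (hcat : IsCaterpillar G)
    (hne : ∀ v w : V, G.Adj v w → h v ≠ h w) :
    ∃ D : ReebDrawing G h, D.crossingSet = ∅ := by
  classical
  obtain ⟨htree, n, s, hsinj, hsadj, hscover⟩ := hcat
  -- the spine-index function
  have hcover' : ∀ v : V, v ∉ Set.range s → ∃ i : Fin n, G.Adj v (s i) := fun v hv =>
    (hscover v).resolve_left hv
  let I : V → Fin n := fun v =>
    if hv : v ∈ Set.range s then hv.choose else (hcover' v hv).choose
  have hIspine : ∀ v (hv : v ∈ Set.range s), s (I v) = v := by
    intro v hv
    simp only [I, dif_pos hv]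
    exact hv.choose_spec
  have hIs : ∀ i : Fin n, I (s i) = i := fun i =>
    hsinj (hIspine (s i) ⟨i, rfl⟩)
  have hIleaf : ∀ v, v ∉ Set.range s → G.Adj v (s (I v)) := by
    intro v hv
    simp only [I, dif_neg hv]
    exact (hcover' v hv).choose_spec
  have hIleaf_uniq : ∀ v, v ∉ Set.range s → ∀ i : Fin n, G.Adj v (s i) → I v = i :=
    fun v hv i hadj => leaf_unique htree hsinj hsadj hv _ i (hIleaf v hv) hadj
  -- numbering of the vertices
  let ρ : V → ℕ := fun v => ((Fintype.equivFin V) v : ℕ)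
  have hρinj : Function.Injective ρ := fun v w hvw =>
    (Fintype.equivFin V).injective (Fin.ext hvw)
  -- the leaf offset scale
  let c : V → ℝ := fun v => ((ρ v : ℝ) + 1) * |h v - h (s (I v))|
  have hcpos : ∀ v, v ∉ Set.range s → 0 < c v := by
    intro v hv
    have := hne _ _ (hIleaf v hv)
    have h1 : (0:ℝ) < (ρ v : ℝ) + 1 := by positivity
    have h2 : 0 < |h v - h (s (I v))| := abs_pos.2 (sub_ne_zero.2 this)
    exact mul_pos h1 h2
  let Lset : Finset V := Finset.univ.filter (fun v => v ∉ Set.range s)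
  have hLset : ∀ v, v ∈ Lset ↔ v ∉ Set.range s := by
    intro v; simp [Lset]
  let F1 : Finset ℝ := insert 1 (Lset.image fun v => 1 / c v)
  let m : ℝ := F1.min' ⟨1, Finset.mem_insert_self 1 _⟩
  have hm_le : ∀ v, v ∉ Set.range s → m ≤ 1 / c v := by
    intro v hv
    exact Finset.min'_le _ _ (Finset.mem_insert_of_mem
      (Finset.mem_image_of_mem _ ((hLset v).2 hv)))
  have hm_pos : 0 < m := by
    have hmem := Finset.min'_mem F1 ⟨1, Finset.mem_insert_self 1 _⟩
    rcases Finset.mem_insert.1 hmem with hm1 | hm2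
    · rw [show m = F1.min' _ from rfl, hm1]; norm_num
    · obtain ⟨v, hv, hveq⟩ := Finset.mem_image.1 hm2
      rw [show m = F1.min' _ from rfl, ← hveq]
      exact div_pos one_pos (hcpos v ((hLset v).1 hv))
  let Bad : Finset ℝ := Lset.image (fun v =>
    if hnext : (I v : ℕ) + 1 < n then
      1 / (((ρ v : ℝ) + 1) * |h (s ⟨(I v : ℕ) + 1, hnext⟩) - h (s (I v))|) else 0)
  obtain ⟨ε, hε⟩ := ((Set.Ioo_infinite hm_pos).diff Bad.finite_toSet).nonempty
  obtain ⟨⟨hε0, hεm⟩, hεbad⟩ := hε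
  have ht1 : ∀ v, v ∉ Set.range s → ε * c v < 1 := by
    intro v hv
    have h1 := hm_le v hv
    have h2 := hcpos v hv
    have : ε < 1 / c v := lt_of_lt_of_le hεm h1
    calc ε * c v < (1 / c v) * c v := by exact mul_lt_mul_of_pos_right this h2
    _ = 1 := by field_simp
  have htpos : ∀ v, v ∉ Set.range s → 0 < ε * c v := fun v hv =>
    mul_pos hε0 (hcpos v hv)
  have hbadval : ∀ v, v ∉ Set.range s → ∀ (hnext : (I v : ℕ) + 1 < n),
      ε ≠ 1 / (((ρ v : ℝ) + 1) * |h (s ⟨(I v : ℕ) + 1, hnext⟩) - h (s (I v))|) := by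
    intro v hv hnext heq
    apply hεbad
    refine Finset.mem_coe.2 (Finset.mem_image.2 ⟨v, (hLset v).2 hv, ?_⟩)
    rw [dif_pos hnext, heq]
  -- the x-coordinates
  let x : V → ℝ := fun v =>
    if v ∈ Set.range s then ((I v : ℕ) : ℝ) else ((I v : ℕ) : ℝ) + ε * c v
  have hxs : ∀ i : Fin n, x (s i) = ((i : ℕ) : ℝ) := by
    intro i
    simp only [x, if_pos (Set.mem_range_self i), hIs i]
  have hxl : ∀ v, v ∉ Set.range s → x v = ((I v : ℕ) : ℝ) + ε * c v := by
    intro v hv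
    simp only [x, if_neg hv]
  -- the curves
  let f : V → V → ℝ → ℝ := fun v w =>
    if h v = h w then (fun _ => 0) else
      fun y => x v + (y - h v) * ((x w - x v) / (h w - h v))
  have hfsymm : ∀ v w, f v w = f w v := by
    intro v w
    by_cases hvw : h v = h w
    · simp only [f, if_pos hvw, if_pos hvw.symm]
    · have hvw' : h w ≠ h v := Ne.symm hvw
      simp only [f, if_neg hvw, if_neg hvw']
      funext y
      have d1 : h w - h v ≠ 0 := sub_ne_zero.2 (Ne.symm hvw)
      have d2 : h v - h w ≠ 0 := sub_ne_zero.2 hvw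
      field_simp
      ring
  let curveF : Sym2 V → ℝ → ℝ := Sym2.lift ⟨f, hfsymm⟩
  have hcurveF : ∀ v w, h v ≠ h w → ∀ y,
      curveF s(v, w) y = x v + (y - h v) * ((x w - x v) / (h w - h v)) := by
    intro v w hvw y
    simp only [curveF, Sym2.lift_mk, f, if_neg hvw]
  have hxsp : ∀ v, v ∈ Set.range s → x v = ((I v : ℕ) : ℝ) := by
    intro v hv; simp only [x, if_pos hv]
  -- injectivity of positions
  have hinj : Function.Injective fun v => ((x v, h v) : ℝ × ℝ) := by
    intro v w hvw
    simp only [Prod.mk.injEq] at hvw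
    obtain ⟨hx_eq, hh_eq⟩ := hvw
    by_cases hv : v ∈ Set.range s <;> by_cases hw : w ∈ Set.range s
    · rw [hxsp v hv, hxsp w hw] at hx_eq
      have : (I v : ℕ) = (I w : ℕ) := Nat.cast_injective hx_eq
      have : I v = I w := Fin.ext this
      rw [← hIspine v hv, ← hIspine w hw, this]
    · exfalso
      rw [hxsp v hv, hxl w hw] at hx_eq
      have h1 := htpos w hw
      have h2 := ht1 w hw
      have : ((I w : ℕ) : ℝ) < ((I v : ℕ) : ℝ) := by linarith
      have : (I w : ℕ) < (I v : ℕ) := Nat.cast_lt.1 this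
      have : ((I w : ℕ) : ℝ) + 1 ≤ ((I v : ℕ) : ℝ) := by exact_mod_cast this
      linarith
    · exfalso
      rw [hxl v hv, hxsp w hw] at hx_eq
      have h1 := htpos v hv
      have h2 := ht1 v hv
      have : ((I v : ℕ) : ℝ) < ((I w : ℕ) : ℝ) := by linarith
      have : (I v : ℕ) < (I w : ℕ) := Nat.cast_lt.1 this
      have : ((I v : ℕ) : ℝ) + 1 ≤ ((I w : ℕ) : ℝ) := by exact_mod_cast this
      linarith
    · rw [hxl v hv, hxl w hw] at hx_eq
      have h1v := htpos v hv; have h2v := ht1 v hv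
      have h1w := htpos w hw; have h2w := ht1 w hw
      have hII : (I v : ℕ) = (I w : ℕ) := by
        by_contra hne'
        rcases Nat.lt_or_ge (I v : ℕ) (I w : ℕ) with hlt | hge
        · have : ((I v : ℕ) : ℝ) + 1 ≤ ((I w : ℕ) : ℝ) := by exact_mod_cast hlt
          linarith
        · have hlt : (I w : ℕ) < (I v : ℕ) := by omega
          have : ((I w : ℕ) : ℝ) + 1 ≤ ((I v : ℕ) : ℝ) := by exact_mod_cast hlt
          linarith
      have hIeq : I v = I w := Fin.ext hII
      have hteq : ε * c v = ε * c w := by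
        have : ((I v : ℕ) : ℝ) = ((I w : ℕ) : ℝ) := by exact_mod_cast hII
        linarith
      have hceq : c v = c w := mul_left_cancel₀ (ne_of_gt hε0) hteq
      simp only [c, hIeq, hh_eq] at hceq
      have habs : (0:ℝ) < |h w - h (s (I w))| :=
        abs_pos.2 (sub_ne_zero.2 (hne _ _ (hIleaf w hw)))
      have : ((ρ v : ℝ) + 1) = ((ρ w : ℝ) + 1) := by
        have := mul_right_cancel₀ (ne_of_gt habs) hceq
        exact this
      have : (ρ v : ℕ) = (ρ w : ℕ) := by exact_mod_cast (by linarith : (ρ v : ℝ) = (ρ w : ℝ))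
      exact hρinj this
  -- continuity
  have hcont : ∀ e ∈ G.edgeSet, Continuous (curveF e) := by
    intro e he
    induction e with
    | _ v w =>
      rw [SimpleGraph.mem_edgeSet] at he
      have hvw := hne v w he
      have : curveF s(v, w) = fun y => x v + (y - h v) * ((x w - x v) / (h w - h v)) := by
        funext y; exact hcurveF v w hvw y
      rw [this]
      fun_prop
  -- endpoints
  have hend : ∀ v w : V, G.Adj v w → curveF s(v, w) (h v) = x v := by
    intro v w hadj
    rw [hcurveF v w (hne v w hadj)]
    ring
  let D : ReebDrawing G h := ⟨x, hinj, curveF, hcont, hend⟩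
  refine ⟨D, ?_⟩
  -- basic facts about the drawing
  have hpos_def : ∀ u : V, D.pos u = (x u, h u) := fun u => rfl
  have hmkpos : ∀ (p : ℝ × ℝ) (u : V), p.1 = x u → p.2 = h u → p = D.pos u := by
    intro p u h1 h2
    rw [hpos_def, ← h1, ← h2]
  have hmem : ∀ (a b : V) (p : ℝ × ℝ), p ∈ D.edgeCurve a b ↔
      (p.2 ∈ Set.uIcc (h a) (h b) ∧ p.1 = curveF s(a, b) p.2) := by
    intro a b p
    exact Iff.rfl
  have hECsymm : ∀ a b : V, D.edgeCurve a b = D.edgeCurve b a := by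
    intro a b
    ext p
    rw [hmem, hmem, Set.uIcc_comm, Sym2.eq_swap]
  have hicc : ∀ z b c : ℝ, b ≤ c → z ∈ Set.uIcc b c → b ≤ z ∧ z ≤ c := by
    intro z b c hbc hz
    rcases Set.mem_uIcc.1 hz with ⟨h1, h2⟩ | ⟨h1, h2⟩ <;> exact ⟨by linarith, by linarith⟩
  have hbound : ∀ (a b : V), G.Adj a b → ∀ (p : ℝ × ℝ), p ∈ D.edgeCurve a b →
      p.1 ∈ Set.uIcc (x a) (x b) := by
    intro a b hab p hp
    rw [hmem] at hp
    rw [hp.2, hcurveF a b (hne a b hab)]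
    exact affine_mem_uIcc (hne a b hab) hp.1
  have hendpt : ∀ (a b : V) (p : ℝ × ℝ), G.Adj a b → x a ≠ x b →
      p ∈ D.edgeCurve a b → p.1 = x b → p = D.pos b := by
    intro a b p hab hxab hp hx
    rw [hmem] at hp
    have e1 : p.1 = x a + (p.2 - h a) * ((x b - x a) / (h b - h a)) := by
      rw [hp.2, hcurveF a b (hne a b hab)]
    have hy : p.2 = h b := affine_endpoint (hne a b hab) hxab (by rw [← e1]; exact hx)
    exact hmkpos p b hx hy
  have hshared : ∀ (u a b : V) (p : ℝ × ℝ), G.Adj u a → G.Adj u b →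
      (x a - x u) / (h a - h u) ≠ (x b - x u) / (h b - h u) →
      p ∈ D.edgeCurve u a → p ∈ D.edgeCurve u b → p = D.pos u := by
    intro u a b p h1 h2 hsl hp1 hp2
    rw [hmem] at hp1 hp2
    have e1 : p.1 = x u + (p.2 - h u) * ((x a - x u) / (h a - h u)) := by
      rw [hp1.2, hcurveF u a (hne u a h1)]
    have e2 : p.1 = x u + (p.2 - h u) * ((x b - x u) / (h b - h u)) := by
      rw [hp2.2, hcurveF u b (hne u b h2)]
    have hz : (p.2 - h u) * ((x a - x u) / (h a - h u) - (x b - x u) / (h b - h u)) = 0 := by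
      linear_combination e2 - e1
    rcases mul_eq_zero.1 hz with hq | hm
    · have hy : p.2 = h u := by linarith
      have hx1 : p.1 = x u := by rw [e1, hy]; ring
      exact hmkpos p u hx1 hy
    · exact absurd (sub_eq_zero.1 hm) hsl
  have habs_m : ∀ l, l ∉ Set.range s → |ε * c l / (h l - h (s (I l)))| = ε * ((ρ l : ℝ) + 1) := by
    intro l hl
    have hΔ : h l - h (s (I l)) ≠ 0 := sub_ne_zero.2 (hne _ _ (hIleaf l hl))
    have habsΔ : |h l - h (s (I l))| ≠ 0 := abs_ne_zero.2 hΔ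
    rw [abs_div, abs_mul, abs_of_pos hε0, abs_of_pos (hcpos l hl)]
    show ε * (((ρ l : ℝ) + 1) * |h l - h (s (I l))|) / |h l - h (s (I l))| = _
    rw [mul_div_assoc, mul_div_cancel_right₀ _ habsΔ]
  -- the three geometric cases
  have haveSS : ∀ (p : ℝ × ℝ) (i j : ℕ) (hi : i + 1 < n) (hj : j + 1 < n), i < j →
      p ∈ D.edgeCurve (s ⟨i, Nat.lt_of_succ_lt hi⟩) (s ⟨i + 1, hi⟩) →
      p ∈ D.edgeCurve (s ⟨j, Nat.lt_of_succ_lt hj⟩) (s ⟨j + 1, hj⟩) →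
      ∃ u, (u = s ⟨i, Nat.lt_of_succ_lt hi⟩ ∨ u = s ⟨i + 1, hi⟩) ∧
        (u = s ⟨j, Nat.lt_of_succ_lt hj⟩ ∨ u = s ⟨j + 1, hj⟩) ∧ p = D.pos u := by
    intro p i j hi hj hij hp1 hp2
    have hadj1 := hsadj i hi
    have hadj2 := hsadj j hj
    have hb1 := hbound _ _ hadj1 p hp1
    have hb2 := hbound _ _ hadj2 p hp2
    rw [hxs, hxs] at hb1 hb2
    simp only [Fin.val_mk] at hb1 hb2
    push_cast at hb1 hb2
    obtain ⟨hA, hB⟩ := hicc _ _ _ (by linarith) hb1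
    obtain ⟨hC, hD⟩ := hicc _ _ _ (by linarith) hb2
    rcases Nat.lt_or_ge (i + 1) j with hj2 | hj1
    · exfalso
      have : (i : ℝ) + 1 + 1 ≤ (j : ℝ) := by exact_mod_cast hj2
      linarith
    · have hji : j = i + 1 := by omega
      subst hji
      push_cast at hC
      have hpx : p.1 = (i : ℝ) + 1 := le_antisymm hB (by linarith)
      have hxAB : x (s ⟨i, Nat.lt_of_succ_lt hi⟩) ≠ x (s ⟨i + 1, hi⟩) := by
        rw [hxs, hxs]
        simp only [Fin.val_mk]
        push_cast
        intro hh; linarith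
      have hposB := hendpt _ _ p hadj1 hxAB hp1 (by
        rw [hxs]; simp only [Fin.val_mk]; push_cast; exact hpx)
      exact ⟨s ⟨i + 1, hi⟩, Or.inr rfl, Or.inl rfl, hposB⟩
  have haveSL : ∀ (p : ℝ × ℝ) (i : ℕ) (hi : i + 1 < n) (l : V) (hl : l ∉ Set.range s),
      p ∈ D.edgeCurve (s ⟨i, Nat.lt_of_succ_lt hi⟩) (s ⟨i + 1, hi⟩) →
      p ∈ D.edgeCurve l (s (I l)) →
      ∃ u, (u = s ⟨i, Nat.lt_of_succ_lt hi⟩ ∨ u = s ⟨i + 1, hi⟩) ∧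
        (u = l ∨ u = s (I l)) ∧ p = D.pos u := by
    intro p i hi l hl hp1 hp2
    have hadj1 := hsadj i hi
    have hadj2 := hIleaf l hl
    have hb1 := hbound _ _ hadj1 p hp1
    have hb2 := hbound _ _ hadj2 p hp2
    rw [hxs, hxs] at hb1
    rw [hxl l hl, hxs] at hb2
    simp only [Fin.val_mk] at hb1
    push_cast at hb1 hb2
    rw [Set.uIcc_comm] at hb2
    obtain ⟨hA, hB⟩ := hicc _ _ _ (by linarith) hb1
    obtain ⟨hC, hD⟩ := hicc _ _ _ (by
      have := htpos l hl; linarith) hb2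
    have htl1 := ht1 l hl
    have htl0 := htpos l hl
    rcases Nat.lt_or_ge (I l : ℕ) i with hk | hk0
    · -- k < i : disjoint strips
      exfalso
      have : ((I l : ℕ) : ℝ) + 1 ≤ (i : ℝ) := by exact_mod_cast hk
      linarith
    rcases Nat.lt_or_ge (i + 1) (I l : ℕ) with hk2 | hk3
    · -- k ≥ i+2 : disjoint strips
      exfalso
      have : (i : ℝ) + 1 + 1 ≤ ((I l : ℕ) : ℝ) := by exact_mod_cast hk2
      linarith
    rcases Nat.lt_or_ge i (I l : ℕ) with hk4 | hk5
    · -- k = i+1 : strips touch at the shared spine vertex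
      have hki : (I l : ℕ) = i + 1 := by omega
      have hsIl : s (I l) = s ⟨i + 1, hi⟩ := congrArg s (Fin.ext (by simp [hki]))
      have hpx : p.1 = (i : ℝ) + 1 := by
        have hcast : ((I l : ℕ) : ℝ) = (i : ℝ) + 1 := by exact_mod_cast hki
        rw [hcast] at hC
        exact le_antisymm hB hC
      have hxAB : x (s ⟨i, Nat.lt_of_succ_lt hi⟩) ≠ x (s ⟨i + 1, hi⟩) := by
        rw [hxs, hxs]
        simp only [Fin.val_mk]
        push_cast
        intro hh; linarith
      have hposB := hendpt _ _ p hadj1 hxAB hp1 (by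
        rw [hxs]; simp only [Fin.val_mk]; push_cast; exact hpx)
      exact ⟨s ⟨i + 1, hi⟩, Or.inr rfl, Or.inr hsIl.symm, hposB⟩
    · -- k = i : shared spine vertex, different slopes
      have hki : (I l : ℕ) = i := by omega
      have hsIl : s (I l) = s ⟨i, Nat.lt_of_succ_lt hi⟩ := congrArg s (Fin.ext (by simp [hki]))
      have hadjuB : G.Adj (s (I l)) (s ⟨i + 1, hi⟩) := by rw [hsIl]; exact hadj1
      have hadjul : G.Adj (s (I l)) l := hadj2.symm
      have hnext : (I l : ℕ) + 1 < n := by omega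
      have hslope : (x (s ⟨i + 1, hi⟩) - x (s (I l))) / (h (s ⟨i + 1, hi⟩) - h (s (I l))) ≠
          (x l - x (s (I l))) / (h l - h (s (I l))) := by
        intro heq
        have hΔs : h (s ⟨i + 1, hi⟩) - h (s (I l)) ≠ 0 :=
          sub_ne_zero.2 (Ne.symm (hne _ _ hadjuB))
        have hΔl : h l - h (s (I l)) ≠ 0 := sub_ne_zero.2 (hne _ _ hadj2)
        have num1 : x (s ⟨i + 1, hi⟩) - x (s (I l)) = 1 := by
          rw [hxs, hxs]
          simp only [Fin.val_mk, hki]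
          push_cast
          ring
        have num2 : x l - x (s (I l)) = ε * c l := by
          rw [hxl l hl, hxs]; ring
        rw [num1, num2] at heq
        have h1 : |1 / (h (s ⟨i + 1, hi⟩) - h (s (I l)))| = |ε * c l / (h l - h (s (I l)))| := by
          rw [heq]
        rw [habs_m l hl, abs_div, abs_one] at h1
        have hΔsabs : |h (s ⟨i + 1, hi⟩) - h (s (I l))| ≠ 0 := abs_ne_zero.2 hΔs
        have hρ1 : ((ρ l : ℝ) + 1) ≠ 0 := by positivity
        have hεval : ε = 1 / (((ρ l : ℝ) + 1) * |h (s ⟨i + 1, hi⟩) - h (s (I l))|) := by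
          rw [eq_div_iff (mul_ne_zero hρ1 hΔsabs)]
          field_simp at h1
          linear_combination -h1
        have hfix : s ⟨(I l : ℕ) + 1, hnext⟩ = s ⟨i + 1, hi⟩ := congrArg s (Fin.ext (by simp [hki]))
        exact hbadval l hl hnext (by rw [hfix]; exact hεval)
      have hpu := hshared (s (I l)) (s ⟨i + 1, hi⟩) l p hadjuB hadjul hslope
        (by rw [hsIl]; exact hp1) (by rw [← hECsymm]; exact hp2)
      exact ⟨s (I l), Or.inl hsIl, Or.inr rfl, hpu⟩
  have haveLL : ∀ (p : ℝ × ℝ) (l l' : V) (hl : l ∉ Set.range s) (hl' : l' ∉ Set.range s),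
      l ≠ l' → p ∈ D.edgeCurve l (s (I l)) → p ∈ D.edgeCurve l' (s (I l')) →
      ∃ u, (u = l ∨ u = s (I l)) ∧ (u = l' ∨ u = s (I l')) ∧ p = D.pos u := by
    intro p l l' hl hl' hll hp1 hp2
    have hadj1 := hIleaf l hl
    have hadj2 := hIleaf l' hl'
    have hb1 := hbound _ _ hadj1 p hp1
    have hb2 := hbound _ _ hadj2 p hp2
    rw [hxl l hl, hxs] at hb1
    rw [hxl l' hl', hxs] at hb2
    rw [Set.uIcc_comm] at hb1 hb2
    obtain ⟨hA, hB⟩ := hicc _ _ _ (by have := htpos l hl; linarith) hb1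
    obtain ⟨hC, hD⟩ := hicc _ _ _ (by have := htpos l' hl'; linarith) hb2
    have ht1l := ht1 l hl
    have ht1l' := ht1 l' hl'
    have ht0l := htpos l hl
    have ht0l' := htpos l' hl'
    rcases Nat.lt_trichotomy (I l : ℕ) (I l' : ℕ) with hk | hk | hk
    · exfalso
      have : ((I l : ℕ) : ℝ) + 1 ≤ ((I l' : ℕ) : ℝ) := by exact_mod_cast hk
      linarith
    · -- shared spine vertex
      have hII : I l = I l' := Fin.ext hk
      have hadjul : G.Adj (s (I l)) l := hadj1.symm
      have hadjul' : G.Adj (s (I l)) l' := by rw [hII]; exact hadj2.symm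
      have hslope : (x l - x (s (I l))) / (h l - h (s (I l))) ≠
          (x l' - x (s (I l))) / (h l' - h (s (I l))) := by
        intro heq
        have hΔl : h l - h (s (I l)) ≠ 0 := sub_ne_zero.2 (hne _ _ hadj1)
        have hΔl' : h l' - h (s (I l)) ≠ 0 := sub_ne_zero.2 (by rw [hII]; exact hne _ _ hadj2)
        have num1 : x l - x (s (I l)) = ε * c l := by rw [hxl l hl, hxs]; ring
        have num2 : x l' - x (s (I l)) = ε * c l' := by
          rw [hxl l' hl', hxs, hII]; ring
        rw [num1, num2] at heq
        have h1 : |ε * c l / (h l - h (s (I l)))| = |ε * c l' / (h l' - h (s (I l')))| := by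
          rw [← hII]
          exact congrArg abs heq
        rw [habs_m l hl, habs_m l' hl'] at h1
        have h2 : ε * ((ρ l : ℝ) + 1) = ε * ((ρ l' : ℝ) + 1) := h1
        have h3 : ((ρ l : ℝ) + 1) = ((ρ l' : ℝ) + 1) := mul_left_cancel₀ (ne_of_gt hε0) h2
        have h4 : ρ l = ρ l' := by exact_mod_cast (by linarith : (ρ l : ℝ) = (ρ l' : ℝ))
        exact hll (hρinj h4)
      have hpu := hshared (s (I l)) l l' p hadjul hadjul' hslope
        (by rw [← hECsymm]; exact hp1) (by rw [← hECsymm, hII]; exact hp2)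
      exact ⟨s (I l), Or.inr rfl, Or.inr (by rw [hII]), hpu⟩
    · exfalso
      have : ((I l' : ℕ) : ℝ) + 1 ≤ ((I l : ℕ) : ℝ) := by exact_mod_cast hk
      linarith
  -- classification of edges
  have hclass : ∀ v w : V, G.Adj v w →
      (∃ (i : ℕ) (hi : i + 1 < n), v = s ⟨i, Nat.lt_of_succ_lt hi⟩ ∧ w = s ⟨i + 1, hi⟩) ∨
      (∃ (i : ℕ) (hi : i + 1 < n), w = s ⟨i, Nat.lt_of_succ_lt hi⟩ ∧ v = s ⟨i + 1, hi⟩) ∨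
      (v ∉ Set.range s ∧ w = s (I v)) ∨
      (w ∉ Set.range s ∧ v = s (I w)) := by
    intro v w hadj
    by_cases hv : v ∈ Set.range s <;> by_cases hw : w ∈ Set.range s
    · obtain ⟨i, rfl⟩ := hv
      obtain ⟨j, rfl⟩ := hw
      rcases spine_consec htree hsinj hsadj i j hadj with hc | hc
      · left
        refine ⟨(i : ℕ), by omega, ?_, ?_⟩
        · exact congrArg s (Fin.ext rfl)
        · exact congrArg s (Fin.ext (by simp [hc]))
      · right; left
        refine ⟨(j : ℕ), by omega, ?_, ?_⟩
        · exact congrArg s (Fin.ext rfl)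
        · exact congrArg s (Fin.ext (by simp [hc]))
    · right; right; right
      obtain ⟨i, rfl⟩ := hv
      refine ⟨hw, ?_⟩
      have := hIleaf_uniq w hw i hadj.symm
      rw [this]
    · right; right; left
      obtain ⟨i, rfl⟩ := hw
      refine ⟨hv, ?_⟩
      have := hIleaf_uniq v hv i hadj
      rw [this]
    · exact absurd hadj (fun hadj =>
        no_leaf_leaf htree hsinj hsadj hv hw (I v) (I w) (hIleaf v hv) (hIleaf w hw) hadj)
  -- canonical orientation of edges
  have horient : ∀ v w : V, G.Adj v w → ∃ a b : V,
      ((∃ (i : ℕ) (hi : i + 1 < n), a = s ⟨i, Nat.lt_of_succ_lt hi⟩ ∧ b = s ⟨i + 1, hi⟩) ∨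
        (a ∉ Set.range s ∧ b = s (I a))) ∧
      G.Adj a b ∧ s(a, b) = s(v, w) ∧ D.edgeCurve a b = D.edgeCurve v w ∧
      ∀ u : V, (u = a ∨ u = b) → (u = v ∨ u = w) := by
    intro v w hadj
    rcases hclass v w hadj with ⟨i, hi, hv, hw⟩ | ⟨i, hi, hw, hv⟩ | ⟨hv, hw⟩ | ⟨hw, hv⟩
    · exact ⟨v, w, Or.inl ⟨i, hi, hv, hw⟩, hadj, rfl, rfl, fun u hu => hu⟩
    · exact ⟨w, v, Or.inl ⟨i, hi, hw, hv⟩, hadj.symm, Sym2.eq_swap, hECsymm w v,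
        fun u hu => hu.symm⟩
    · exact ⟨v, w, Or.inr ⟨hv, hw⟩, hadj, rfl, rfl, fun u hu => hu⟩
    · exact ⟨w, v, Or.inr ⟨hw, hv⟩, hadj.symm, Sym2.eq_swap, hECsymm w v,
        fun u hu => hu.symm⟩
  -- the master lemma for canonical edges
  have key0 : ∀ (p : ℝ × ℝ) (a b a' b' : V),
      ((∃ (i : ℕ) (hi : i + 1 < n), a = s ⟨i, Nat.lt_of_succ_lt hi⟩ ∧ b = s ⟨i + 1, hi⟩) ∨
        (a ∉ Set.range s ∧ b = s (I a))) →
      ((∃ (i : ℕ) (hi : i + 1 < n), a' = s ⟨i, Nat.lt_of_succ_lt hi⟩ ∧ b' = s ⟨i + 1, hi⟩) ∨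
        (a' ∉ Set.range s ∧ b' = s (I a'))) →
      G.Adj a b → G.Adj a' b' → s(a, b) ≠ s(a', b') →
      p ∈ D.edgeCurve a b → p ∈ D.edgeCurve a' b' →
      ∃ u, (u = a ∨ u = b) ∧ (u = a' ∨ u = b') ∧ p = D.pos u := by
    rintro p a b a' b' (⟨i, hi, rfl, rfl⟩ | ⟨ha, rfl⟩) (⟨j, hj, rfl, rfl⟩ | ⟨ha', rfl⟩)
      hadj hadj' hnee hp1 hp2
    · rcases Nat.lt_trichotomy i j with hlt | heq | hgt
      · exact haveSS p i j hi hj hlt hp1 hp2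
      · exfalso; subst heq; exact hnee rfl
      · obtain ⟨u, hu1, hu2, hupos⟩ := haveSS p j i hj hi hgt hp2 hp1
        exact ⟨u, hu2, hu1, hupos⟩
    · exact haveSL p i hi a' ha' hp1 hp2
    · obtain ⟨u, hu1, hu2, hupos⟩ := haveSL p j hj a ha hp2 hp1
      exact ⟨u, hu2, hu1, hupos⟩
    · have hll : a ≠ a' := by
        intro hh
        subst hh
        exact hnee rfl
      exact haveLL p a a' ha ha' hll hp1 hp2
  have key : ∀ (p : ℝ × ℝ) (v w v' w' : V), G.Adj v w → G.Adj v' w' → s(v, w) ≠ s(v', w') →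
      p ∈ D.edgeCurve v w → p ∈ D.edgeCurve v' w' →
      ∃ u, (u = v ∨ u = w) ∧ (u = v' ∨ u = w') ∧ p = D.pos u := by
    intro p v w v' w' hadj hadj' hnee hp1 hp2
    obtain ⟨a, b, hc1, hadj1, hs1, hec1, hor1⟩ := horient v w hadj
    obtain ⟨a', b', hc2, hadj2, hs2, hec2, hor2⟩ := horient v' w' hadj'
    obtain ⟨u, hu1, hu2, hupos⟩ := key0 p a b a' b' hc1 hc2 hadj1 hadj2
      (by rw [hs1, hs2]; exact hnee) (by rw [hec1]; exact hp1) (by rw [hec2]; exact hp2)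
    exact ⟨u, hor1 u hu1, hor2 u hu2, hupos⟩
  -- no crossings
  ext q
  simp only [ReebDrawing.crossingSet, Set.mem_setOf_eq, Set.mem_empty_iff_false, iff_false]
  rintro ⟨v, w, v', w', -, hadj, hadj', hnee, hp1, hp2, hlast⟩
  obtain ⟨u, hu1, hu2, hupos⟩ := key q.2 v w v' w' hadj hadj' hnee hp1 hp2
  exact hlast u hu1 hu2 hupos

end Main

/-- Let `(G, h)` be a Reeb graph (in particular, adjacent vertices
have distinct heights, so that edges can be drawn `y`-monotonically) such that `G` is
a caterpillar in which every vertex has degree at most `3`. Then `(G, h)` admits a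
drawing with zero crossings. -/
theorem caterpillar_reeb_graph_planar
    {V : Type*} [Fintype V] (G : SimpleGraph V) (h : V → ℝ)
    (hcat : IsCaterpillar G)
    (hdeg : ∀ v : V, (G.neighborSet v).ncard ≤ 3)
    (hne : ∀ v w : V, G.Adj v w → h v ≠ h w) :
    ∃ D : ReebDrawing G h, D.crossingSet = ∅ := by
  exact caterpillar_reeb_graph_planar' G h hcat hne
end

section
/- There exists a Reeb graph (G, h) such that G is a finite tree, h is injective on the vertices, and every drawing of (G, h) has at least one crossing. -/
open Set

section TreeExample

/-- The vertex type of our example tree. -/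
inductive Vx : Type
  | c | u1 | u2 | u3 | t1 | t2 | t3 | b1 | b2 | b3
  deriving DecidableEq

instance : Fintype Vx :=
  ⟨{Vx.c, Vx.u1, Vx.u2, Vx.u3, Vx.t1, Vx.t2, Vx.t3, Vx.b1, Vx.b2, Vx.b3}, fun x => by cases x <;> decide⟩

namespace Vx

/-- The list of edges of the example tree. -/
def edgeL : List (Vx × Vx) :=
  [(c,u1),(c,u2),(c,u3),(u1,t1),(u2,t2),(u3,t3),(u1,b1),(u2,b2),(u3,b3)]

/-- The example tree as a simple graph. -/
def myG : SimpleGraph Vx where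
  Adj a b := (a,b) ∈ edgeL ∨ (b,a) ∈ edgeL
  symm := ⟨fun a b hab => Or.symm hab⟩
  loopless := ⟨by intro v; cases v <;> decide⟩

instance : DecidableRel myG.Adj := fun _ _ => inferInstanceAs (Decidable (_ ∨ _))

/-- The heights, as integers. -/
def hz : Vx → ℤ
  | c => 0 | u1 => 1 | u2 => 2 | u3 => 3
  | t1 => 11 | t2 => 12 | t3 => 13
  | b1 => -11 | b2 => -12 | b3 => -13

/-- The heights, as reals. -/
noncomputable def hR : Vx → ℝ := fun v => (hz v : ℝ)

lemma hR_inj : Function.Injective hR := by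
  have h : ∀ a b : Vx, hz a = hz b → a = b := by decide
  intro a b hab
  exact h a b (Int.cast_injective hab)

end Vx

/-- Walks starting in a set closed under adjacency stay in it. -/
lemma walk_mem_closed {V : Type*} {H : SimpleGraph V} {S : Set V}
    (hcl : ∀ a b : V, H.Adj a b → a ∈ S → b ∈ S) :
    ∀ {a b : V}, H.Walk a b → a ∈ S → b ∈ S := by
  intro a b p
  induction p with
  | nil => exact id
  | cons hadj _ ih => exact fun ha => ih (hcl _ _ hadj ha)

/-- A sufficient condition for an edge to be a bridge: a set of vertices containing
one endpoint but not the other, such that the only edges leaving it are copies of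
the given edge. -/
lemma isBridge_of_separation {V : Type*} [DecidableEq V] {G : SimpleGraph V} {v w : V}
    (h : G.Adj v w) (l : List V) (hv : v ∉ l) (hw : w ∈ l)
    (hcl : ∀ a b : V, G.Adj a b → a ∈ l → b ∈ l ∨ (a = v ∧ b = w) ∨ (a = w ∧ b = v)) :
    G.IsBridge s(v, w) := by
  rw [SimpleGraph.isBridge_iff]
  refine fun hr => ?_
  obtain ⟨p⟩ := hr.symm
  have hstay : ∀ a b : V, (G \ SimpleGraph.fromEdgeSet {s(v, w)}).Adj a b →
      a ∈ ({x | x ∈ l} : Set V) → b ∈ ({x | x ∈ l} : Set V) := by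
    intro a b hadj ha
    rw [SimpleGraph.sdiff_adj, SimpleGraph.fromEdgeSet_adj] at hadj
    rcases hcl a b hadj.1 ha with hb | ⟨rfl, rfl⟩ | ⟨rfl, rfl⟩
    · exact hb
    · exact absurd ⟨rfl, hadj.1.ne⟩ hadj.2
    · exact absurd ⟨Sym2.eq_swap, hadj.1.ne⟩ hadj.2
  exact hv (walk_mem_closed hstay p hw)

namespace Vx

lemma myG_connected : myG.Connected := by
  have hu1 : myG.Reachable c u1 := SimpleGraph.Adj.reachable (by decide)
  have hu2 : myG.Reachable c u2 := SimpleGraph.Adj.reachable (by decide)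
  have hu3 : myG.Reachable c u3 := SimpleGraph.Adj.reachable (by decide)
  have hreach : ∀ v : Vx, myG.Reachable c v := by
    intro v
    cases v with
    | c => exact SimpleGraph.Reachable.refl _
    | u1 => exact hu1
    | u2 => exact hu2
    | u3 => exact hu3
    | t1 => exact hu1.trans (SimpleGraph.Adj.reachable (by decide))
    | t2 => exact hu2.trans (SimpleGraph.Adj.reachable (by decide))
    | t3 => exact hu3.trans (SimpleGraph.Adj.reachable (by decide))
    | b1 => exact hu1.trans (SimpleGraph.Adj.reachable (by decide))
    | b2 => exact hu2.trans (SimpleGraph.Adj.reachable (by decide))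
    | b3 => exact hu3.trans (SimpleGraph.Adj.reachable (by decide))
  rw [SimpleGraph.connected_iff]
  exact ⟨fun a b => (hreach a).symm.trans (hreach b), ⟨c⟩⟩

lemma myG_isTree : myG.IsTree := by
  refine ⟨myG_connected, ?_⟩
  rw [SimpleGraph.isAcyclic_iff_forall_adj_isBridge]
  intro v w hadj
  cases v <;> cases w <;>
    first
      | exact absurd hadj (by decide)
      | exact isBridge_of_separation hadj [u1, t1, b1] (by decide) (by decide) (by decide)
      | exact isBridge_of_separation hadj [u2, t2, b2] (by decide) (by decide) (by decide)
      | exact isBridge_of_separation hadj [u3, t3, b3] (by decide) (by decide) (by decide)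
      | exact isBridge_of_separation hadj [t1] (by decide) (by decide) (by decide)
      | exact isBridge_of_separation hadj [t2] (by decide) (by decide) (by decide)
      | exact isBridge_of_separation hadj [t3] (by decide) (by decide) (by decide)
      | exact isBridge_of_separation hadj [b1] (by decide) (by decide) (by decide)
      | exact isBridge_of_separation hadj [b2] (by decide) (by decide) (by decide)
      | exact isBridge_of_separation hadj [b3] (by decide) (by decide) (by decide)
      | exact isBridge_of_separation hadj [c, u2, t2, b2, u3, t3, b3]
          (by decide) (by decide) (by decide)
      | exact isBridge_of_separation hadj [c, u1, t1, b1, u3, t3, b3]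
          (by decide) (by decide) (by decide)
      | exact isBridge_of_separation hadj [c, u1, t1, b1, u2, t2, b2]
          (by decide) (by decide) (by decide)
      | exact isBridge_of_separation hadj [c, u1, u2, u3, t2, t3, b1, b2, b3]
          (by decide) (by decide) (by decide)
      | exact isBridge_of_separation hadj [c, u1, u2, u3, t1, t3, b1, b2, b3]
          (by decide) (by decide) (by decide)
      | exact isBridge_of_separation hadj [c, u1, u2, u3, t1, t2, b1, b2, b3]
          (by decide) (by decide) (by decide)
      | exact isBridge_of_separation hadj [c, u1, u2, u3, t1, t2, t3, b2, b3]
          (by decide) (by decide) (by decide)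
      | exact isBridge_of_separation hadj [c, u1, u2, u3, t1, t2, t3, b1, b3]
          (by decide) (by decide) (by decide)
      | exact isBridge_of_separation hadj [c, u1, u2, u3, t1, t2, t3, b1, b2]
          (by decide) (by decide) (by decide)

end Vx

end TreeExample

section Analytic

/-- In a crossing-free drawing, the curves of two disjoint edges never meet over
the common height interval. -/
lemma ReebDrawing.no_touch {V : Type*} {G : SimpleGraph V} {ht : V → ℝ}
    (D : ReebDrawing G ht) (hD : D.crossingSet = ∅) {v w v' w' : V}
    (h1 : G.Adj v w) (h2 : G.Adj v' w')
    (hd1 : v ≠ v') (hd2 : v ≠ w') (hd3 : w ≠ v') (hd4 : w ≠ w')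
    {y : ℝ} (hy1 : y ∈ Set.uIcc (ht v) (ht w)) (hy2 : y ∈ Set.uIcc (ht v') (ht w')) :
    D.curve s(v, w) y ≠ D.curve s(v', w') y := by
  intro heq
  have hne : s(v, w) ≠ s(v', w') := by
    rw [Ne, Sym2.eq_iff]
    rintro (⟨rfl, rfl⟩ | ⟨rfl, rfl⟩)
    · exact hd1 rfl
    · exact hd2 rfl
  have hcr : D.IsCrossing (D.curve s(v, w) y, y) v w v' w' := by
    refine ⟨h1, h2, hne, ⟨hy1, rfl⟩, ⟨hy2, heq⟩, ?_⟩
    rintro u (rfl | rfl) (rfl | rfl) <;> first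
      | exact absurd rfl hd1
      | exact absurd rfl hd2
      | exact absurd rfl hd3
      | exact absurd rfl hd4
  have hmem : (s(s(v, w), s(v', w')), ((D.curve s(v, w) y, y) : ℝ × ℝ)) ∈ D.crossingSet :=
    ⟨v, w, v', w', rfl, hcr⟩
  rw [hD] at hmem
  exact hmem

/-- Two continuous functions that never agree on an interval keep the same order
at both endpoints. -/
lemma sign_persist {f g : ℝ → ℝ} {a b : ℝ} (hab : a ≤ b)
    (hf : Continuous f) (hg : Continuous g)
    (hne : ∀ y ∈ Set.Icc a b, f y ≠ g y) :
    (f a < g a ↔ f b < g b) := by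
  have key : ∀ f g : ℝ → ℝ, Continuous f → Continuous g →
      (∀ y ∈ Set.Icc a b, f y ≠ g y) → f a < g a → f b < g b := by
    intro f g hf hg hne hlt
    by_contra hnot
    have h1 : g b < f b :=
      lt_of_le_of_ne (not_lt.mp hnot) (Ne.symm (hne b ⟨hab, le_refl b⟩))
    have h0 : (0 : ℝ) ∈ Set.Icc (g b - f b) (g a - f a) := ⟨by linarith, by linarith⟩
    have := intermediate_value_Icc' hab ((hg.sub hf).continuousOn) h0
    obtain ⟨y, hy, hy0⟩ := this
    have hy0' : g y - f y = 0 := hy0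
    exact hne y hy (by linarith)
  constructor
  · exact key f g hf hg hne
  · intro hb
    by_contra ha
    have h1 : g a < f a := lt_of_le_of_ne (not_lt.mp ha) (Ne.symm (hne a ⟨le_refl a, hab⟩))
    have := key g f hg hf (fun y hy => (hne y hy).symm) h1
    linarith

/-- In a crossing-free drawing, the relative order of the curves of two disjoint
edges is the same at both endpoints of a common height interval. -/
lemma ReebDrawing.cmp {V : Type*} {G : SimpleGraph V} {ht : V → ℝ}
    (D : ReebDrawing G ht) (hD : D.crossingSet = ∅) {v w v' w' : V}
    (h1 : G.Adj v w) (h2 : G.Adj v' w')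
    (hd1 : v ≠ v') (hd2 : v ≠ w') (hd3 : w ≠ v') (hd4 : w ≠ w')
    {a b : ℝ} (hab : a ≤ b)
    (hs1 : Set.Icc a b ⊆ Set.uIcc (ht v) (ht w))
    (hs2 : Set.Icc a b ⊆ Set.uIcc (ht v') (ht w')) :
    (D.curve s(v, w) a < D.curve s(v', w') a ↔
      D.curve s(v, w) b < D.curve s(v', w') b) := by
  refine sign_persist hab (D.curve_cont _ ((SimpleGraph.mem_edgeSet G).mpr h1))
    (D.curve_cont _ ((SimpleGraph.mem_edgeSet G).mpr h2)) ?_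
  intro y hy
  exact D.no_touch hD h1 h2 hd1 hd2 hd3 hd4 (hs1 hy) (hs2 hy)

end Analytic


namespace Vx

/-- The key geometric fact: the example Reeb graph admits no crossing-free drawing. -/
lemma no_planar_drawing (D : ReebDrawing myG hR) (hD : D.crossingSet = ∅) : False := by
  -- height values
  have hvc : hR c = 0 := by simp [hR, hz]
  have hv1 : hR u1 = 1 := by simp [hR, hz]
  have hv2 : hR u2 = 2 := by simp [hR, hz]
  have hv3 : hR u3 = 3 := by simp [hR, hz]
  have hw1 : hR t1 = 11 := by simp [hR, hz]
  have hw2 : hR t2 = 12 := by simp [hR, hz]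
  have hb1 : hR b1 = -11 := by simp [hR, hz]
  have hb2 : hR b2 = -12 := by simp [hR, hz]
  have hb3 : hR b3 = -13 := by simp [hR, hz]
  -- adjacencies
  have aCU1 : myG.Adj c u1 := by decide
  have aCU2 : myG.Adj c u2 := by decide
  have aCU3 : myG.Adj c u3 := by decide
  have aU1T1 : myG.Adj u1 t1 := by decide
  have aU2T2 : myG.Adj u2 t2 := by decide
  have aU1B1 : myG.Adj u1 b1 := by decide
  have aU2B2 : myG.Adj u2 b2 := by decide
  have aU3B3 : myG.Adj u3 b3 := by decide
  -- interval computations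
  have Ecu1 : Set.uIcc (hR c) (hR u1) = Set.Icc (0:ℝ) 1 := by
    rw [hvc, hv1, Set.uIcc_of_le]; norm_num
  have Ecu2 : Set.uIcc (hR c) (hR u2) = Set.Icc (0:ℝ) 2 := by
    rw [hvc, hv2, Set.uIcc_of_le]; norm_num
  have Ecu3 : Set.uIcc (hR c) (hR u3) = Set.Icc (0:ℝ) 3 := by
    rw [hvc, hv3, Set.uIcc_of_le]; norm_num
  have Eub1 : Set.uIcc (hR u1) (hR b1) = Set.Icc (-11:ℝ) 1 := by
    rw [hv1, hb1, Set.uIcc_of_ge]; norm_num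
  have Eub2 : Set.uIcc (hR u2) (hR b2) = Set.Icc (-12:ℝ) 2 := by
    rw [hv2, hb2, Set.uIcc_of_ge]; norm_num
  have Eub3 : Set.uIcc (hR u3) (hR b3) = Set.Icc (-13:ℝ) 3 := by
    rw [hv3, hb3, Set.uIcc_of_ge]; norm_num
  have Eut1 : Set.uIcc (hR u1) (hR t1) = Set.Icc (1:ℝ) 11 := by
    rw [hv1, hw1, Set.uIcc_of_le]; norm_num
  have Eut2 : Set.uIcc (hR u2) (hR t2) = Set.Icc (2:ℝ) 12 := by
    rw [hv2, hw2, Set.uIcc_of_le]; norm_num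
  -- endpoint evaluations
  have g1a : D.curve s(c, u1) 0 = D.x c := by
    have := D.curve_end c u1 aCU1; rwa [hvc] at this
  have g2a : D.curve s(c, u2) 0 = D.x c := by
    have := D.curve_end c u2 aCU2; rwa [hvc] at this
  have g3a : D.curve s(c, u3) 0 = D.x c := by
    have := D.curve_end c u3 aCU3; rwa [hvc] at this
  have g1b : D.curve s(c, u1) 1 = D.x u1 := by
    have := D.curve_end u1 c aCU1.symm; rwa [hv1, Sym2.eq_swap] at this
  have g2b : D.curve s(c, u2) 2 = D.x u2 := by
    have := D.curve_end u2 c aCU2.symm; rwa [hv2, Sym2.eq_swap] at this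
  have g3b : D.curve s(c, u3) 3 = D.x u3 := by
    have := D.curve_end u3 c aCU3.symm; rwa [hv3, Sym2.eq_swap] at this
  have f1b : D.curve s(u1, b1) 1 = D.x u1 := by
    have := D.curve_end u1 b1 aU1B1; rwa [hv1] at this
  have f2b : D.curve s(u2, b2) 2 = D.x u2 := by
    have := D.curve_end u2 b2 aU2B2; rwa [hv2] at this
  have f3b : D.curve s(u3, b3) 3 = D.x u3 := by
    have := D.curve_end u3 b3 aU3B3; rwa [hv3] at this
  have e1b : D.curve s(u1, t1) 1 = D.x u1 := by
    have := D.curve_end u1 t1 aU1T1; rwa [hv1] at this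
  have e2b : D.curve s(u2, t2) 2 = D.x u2 := by
    have := D.curve_end u2 t2 aU2T2; rwa [hv2] at this
  -- order-persistence facts
  have A1 := D.cmp hD aCU1 aU2B2 (by decide) (by decide) (by decide) (by decide)
    (a := 0) (b := 1) (by norm_num)
    (by rw [Ecu1]) (by rw [Eub2]; exact Set.Icc_subset_Icc (by norm_num) (by norm_num))
  have A2 := D.cmp hD aU1B1 aU2B2 (by decide) (by decide) (by decide) (by decide)
    (a := 0) (b := 1) (by norm_num)
    (by rw [Eub1]; exact Set.Icc_subset_Icc (by norm_num) (by norm_num))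
    (by rw [Eub2]; exact Set.Icc_subset_Icc (by norm_num) (by norm_num))
  have A3 := D.cmp hD aCU1 aU3B3 (by decide) (by decide) (by decide) (by decide)
    (a := 0) (b := 1) (by norm_num)
    (by rw [Ecu1]) (by rw [Eub3]; exact Set.Icc_subset_Icc (by norm_num) (by norm_num))
  have A4 := D.cmp hD aU1B1 aU3B3 (by decide) (by decide) (by decide) (by decide)
    (a := 0) (b := 1) (by norm_num)
    (by rw [Eub1]; exact Set.Icc_subset_Icc (by norm_num) (by norm_num))
    (by rw [Eub3]; exact Set.Icc_subset_Icc (by norm_num) (by norm_num))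
  have A5 := D.cmp hD aCU2 aU3B3 (by decide) (by decide) (by decide) (by decide)
    (a := 0) (b := 2) (by norm_num)
    (by rw [Ecu2]) (by rw [Eub3]; exact Set.Icc_subset_Icc (by norm_num) (by norm_num))
  have A6 := D.cmp hD aU2B2 aU3B3 (by decide) (by decide) (by decide) (by decide)
    (a := 0) (b := 2) (by norm_num)
    (by rw [Eub2]; exact Set.Icc_subset_Icc (by norm_num) (by norm_num))
    (by rw [Eub3]; exact Set.Icc_subset_Icc (by norm_num) (by norm_num))
  have A7 := D.cmp hD aCU2 aU1B1 (by decide) (by decide) (by decide) (by decide)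
    (a := 0) (b := 1) (by norm_num)
    (by rw [Ecu2]; exact Set.Icc_subset_Icc (by norm_num) (by norm_num))
    (by rw [Eub1]; exact Set.Icc_subset_Icc (by norm_num) (by norm_num))
  have A8 := D.cmp hD aCU2 aU1T1 (by decide) (by decide) (by decide) (by decide)
    (a := 1) (b := 2) (by norm_num)
    (by rw [Ecu2]; exact Set.Icc_subset_Icc (by norm_num) (by norm_num))
    (by rw [Eut1]; exact Set.Icc_subset_Icc (by norm_num) (by norm_num))
  have A9 := D.cmp hD aU2B2 aU1B1 (by decide) (by decide) (by decide) (by decide)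
    (a := 0) (b := 1) (by norm_num)
    (by rw [Eub2]; exact Set.Icc_subset_Icc (by norm_num) (by norm_num))
    (by rw [Eub1]; exact Set.Icc_subset_Icc (by norm_num) (by norm_num))
  have A10 := D.cmp hD aU2B2 aU1T1 (by decide) (by decide) (by decide) (by decide)
    (a := 1) (b := 2) (by norm_num)
    (by rw [Eub2]; exact Set.Icc_subset_Icc (by norm_num) (by norm_num))
    (by rw [Eut1]; exact Set.Icc_subset_Icc (by norm_num) (by norm_num))
  have A11 := D.cmp hD aCU3 aU1B1 (by decide) (by decide) (by decide) (by decide)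
    (a := 0) (b := 1) (by norm_num)
    (by rw [Ecu3]; exact Set.Icc_subset_Icc (by norm_num) (by norm_num))
    (by rw [Eub1]; exact Set.Icc_subset_Icc (by norm_num) (by norm_num))
  have A12 := D.cmp hD aCU3 aU1T1 (by decide) (by decide) (by decide) (by decide)
    (a := 1) (b := 3) (by norm_num)
    (by rw [Ecu3]; exact Set.Icc_subset_Icc (by norm_num) (by norm_num))
    (by rw [Eut1]; exact Set.Icc_subset_Icc (by norm_num) (by norm_num))
  have A13 := D.cmp hD aU3B3 aU1B1 (by decide) (by decide) (by decide) (by decide)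
    (a := 0) (b := 1) (by norm_num)
    (by rw [Eub3]; exact Set.Icc_subset_Icc (by norm_num) (by norm_num))
    (by rw [Eub1]; exact Set.Icc_subset_Icc (by norm_num) (by norm_num))
  have A14 := D.cmp hD aU3B3 aU1T1 (by decide) (by decide) (by decide) (by decide)
    (a := 1) (b := 3) (by norm_num)
    (by rw [Eub3]; exact Set.Icc_subset_Icc (by norm_num) (by norm_num))
    (by rw [Eut1]; exact Set.Icc_subset_Icc (by norm_num) (by norm_num))
  have A15 := D.cmp hD aCU3 aU2B2 (by decide) (by decide) (by decide) (by decide)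
    (a := 0) (b := 2) (by norm_num)
    (by rw [Ecu3]; exact Set.Icc_subset_Icc (by norm_num) (by norm_num))
    (by rw [Eub2]; exact Set.Icc_subset_Icc (by norm_num) (by norm_num))
  have A16 := D.cmp hD aCU3 aU2T2 (by decide) (by decide) (by decide) (by decide)
    (a := 2) (b := 3) (by norm_num)
    (by rw [Ecu3]; exact Set.Icc_subset_Icc (by norm_num) (by norm_num))
    (by rw [Eut2]; exact Set.Icc_subset_Icc (by norm_num) (by norm_num))
  have A17 := D.cmp hD aU3B3 aU2B2 (by decide) (by decide) (by decide) (by decide)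
    (a := 0) (b := 2) (by norm_num)
    (by rw [Eub3]; exact Set.Icc_subset_Icc (by norm_num) (by norm_num))
    (by rw [Eub2]; exact Set.Icc_subset_Icc (by norm_num) (by norm_num))
  have A18 := D.cmp hD aU3B3 aU2T2 (by decide) (by decide) (by decide) (by decide)
    (a := 2) (b := 3) (by norm_num)
    (by rw [Eub3]; exact Set.Icc_subset_Icc (by norm_num) (by norm_num))
    (by rw [Eut2]; exact Set.Icc_subset_Icc (by norm_num) (by norm_num))
  -- the six order-transfer biconditionals
  have B12 : D.x c < D.curve s(u2, b2) 0 ↔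
      D.curve s(u1, b1) 0 < D.curve s(u2, b2) 0 := by
    rw [← g1a, A1, g1b, ← f1b]; exact A2.symm
  have B13 : D.x c < D.curve s(u3, b3) 0 ↔
      D.curve s(u1, b1) 0 < D.curve s(u3, b3) 0 := by
    rw [← g1a, A3, g1b, ← f1b]; exact A4.symm
  have B23 : D.x c < D.curve s(u3, b3) 0 ↔
      D.curve s(u2, b2) 0 < D.curve s(u3, b3) 0 := by
    rw [← g2a, A5, g2b, ← f2b]; exact A6.symm
  have B21 : D.x c < D.curve s(u1, b1) 0 ↔
      D.curve s(u2, b2) 0 < D.curve s(u1, b1) 0 := by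
    rw [← g2a, A7, f1b, ← e1b, A8, g2b, ← f2b, ← A10, e1b, ← f1b, ← A9]
  have B31 : D.x c < D.curve s(u1, b1) 0 ↔
      D.curve s(u3, b3) 0 < D.curve s(u1, b1) 0 := by
    rw [← g3a, A11, f1b, ← e1b, A12, g3b, ← f3b, ← A14, e1b, ← f1b, ← A13]
  have B32 : D.x c < D.curve s(u2, b2) 0 ↔
      D.curve s(u3, b3) 0 < D.curve s(u2, b2) 0 := by
    rw [← g3a, A15, f2b, ← e2b, A16, g3b, ← f3b, ← A18, e2b, ← f2b, ← A17]
  -- the starting points of the three lower strands are pairwise distinct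
  have d12 : D.curve s(u1, b1) 0 ≠ D.curve s(u2, b2) 0 :=
    D.no_touch hD aU1B1 aU2B2 (by decide) (by decide) (by decide) (by decide)
      (by rw [Eub1]; norm_num) (by rw [Eub2]; norm_num)
  have d13 : D.curve s(u1, b1) 0 ≠ D.curve s(u3, b3) 0 :=
    D.no_touch hD aU1B1 aU3B3 (by decide) (by decide) (by decide) (by decide)
      (by rw [Eub1]; norm_num) (by rw [Eub3]; norm_num)
  have d23 : D.curve s(u2, b2) 0 ≠ D.curve s(u3, b3) 0 :=
    D.no_touch hD aU2B2 aU3B3 (by decide) (by decide) (by decide) (by decide)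
      (by rw [Eub2]; norm_num) (by rw [Eub3]; norm_num)
  -- derive the contradiction
  rcases lt_trichotomy (D.curve s(u1, b1) 0) (D.curve s(u2, b2) 0) with h12 | h12 | h12
  · rcases lt_trichotomy (D.curve s(u2, b2) 0) (D.curve s(u3, b3) 0) with h23 | h23 | h23
    · have hx := B12.mpr h12
      have := B32.mp hx
      linarith
    · exact d23 h23
    · rcases lt_trichotomy (D.curve s(u1, b1) 0) (D.curve s(u3, b3) 0) with h13 | h13 | h13
      · have hx := B13.mpr h13
        have := B23.mp hx
        linarith
      · exact d13 h13
      · have hx := B31.mpr h13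
        have := B21.mp hx
        linarith
  · exact d12 h12
  · rcases lt_trichotomy (D.curve s(u1, b1) 0) (D.curve s(u3, b3) 0) with h13 | h13 | h13
    · have hx := B21.mpr h12
      have := B31.mp hx
      linarith
    · exact d13 h13
    · rcases lt_trichotomy (D.curve s(u2, b2) 0) (D.curve s(u3, b3) 0) with h23 | h23 | h23
      · have hx := B23.mpr h23
        have := B13.mp hx
        linarith
      · exact d23 h23
      · have hx := B32.mpr h23
        have := B12.mp hx
        linarith

end Vx

/-- There exists a Reeb graph `(G, h)` such that `G` is a finite
tree, `h` is injective on the vertices, and every drawing of `(G, h)` has at least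
one crossing. -/
theorem exists_tree_reeb_graph_nonplanar :
    ∃ (V : Type) (_ : Fintype V) (G : SimpleGraph V) (h : V → ℝ),
      G.IsTree ∧ Function.Injective h ∧
      ∀ D : ReebDrawing G h, D.crossingSet ≠ ∅ := by
    exact ⟨Vx, inferInstance, Vx.myG, Vx.hR, Vx.myG_isTree, Vx.hR_inj,
    fun D hD => Vx.no_planar_drawing D hD⟩
end

section
/- Let (G, h) be a Reeb graph such that G is a cycle with n vertices (n even, n ≥ 6) whose heights alternate along the cycle between two values b < t. Then in every drawing of (G, h), at most two edges of the cycle are involved in no crossing. -/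
open Set

section Aux

lemma three_distinct {α : Type*} {s : Set α} (hs : 2 < s.encard) :
    ∃ a ∈ s, ∃ b ∈ s, ∃ c ∈ s, a ≠ b ∧ a ≠ c ∧ b ≠ c := by
  obtain ⟨a, ha⟩ : s.Nonempty := by
    rw [← Set.encard_pos] at *; exact lt_trans (by norm_num) hs
  have h2 : 1 < (s \ {a}).encard := by
    by_contra hh
    push_neg at hh
    have := Set.encard_diff_singleton_add_one ha
    rw [← this] at hs
    have : (s \ {a}).encard + 1 ≤ 1 + 1 := add_le_add_left hh 1
    exact absurd (lt_of_lt_of_le hs this) (by norm_num)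
  obtain ⟨b, c, hb, hc, hbc⟩ := Set.one_lt_encard_iff.mp h2
  exact ⟨a, ha, b, hb.1, c, hc.1, Ne.symm hb.2, Ne.symm hc.2, hbc⟩

variable {V : Type*} {G : SimpleGraph V} {h : V → ℝ} (D : ReebDrawing G h) {b t : ℝ}

/-- At a height strictly between `b` and `t`, a curve of an edge not crossed by
anything does not meet the curve of any other edge. -/
lemma notouch (hIcc : ∀ v w : V, G.Adj v w → Set.uIcc (h v) (h w) = Set.Icc b t)
    (hmem : ∀ u : V, h u = b ∨ h u = t)
    {v w v' w' : V} (hvw : G.Adj v w) (hvw' : G.Adj v' w')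
    (hne : s(v', w') ≠ s(v, w)) (hE : D.edgeCrossings s(v, w) = ∅)
    {y : ℝ} (hy : y ∈ Set.Ioo b t) :
    D.curve s(v', w') y ≠ D.curve s(v, w) y := by
  intro heq
  have hyIcc : y ∈ Set.Icc b t := Set.mem_Icc.mpr ⟨hy.1.le, hy.2.le⟩
  set p : ℝ × ℝ := (D.curve s(v, w) y, y) with hp
  have hcross : D.IsCrossing p v w v' w' := by
    refine ⟨hvw, hvw', hne.symm, ⟨?_, rfl⟩, ⟨?_, heq.symm⟩, ?_⟩
    · rw [hIcc v w hvw]; exact hyIcc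
    · rw [hIcc v' w' hvw']; exact hyIcc
    · intro u hu _ hpu
      have h2 : y = h u := congrArg Prod.snd hpu
      rcases hmem u with h3 | h3 <;> rw [h3] at h2
      · exact absurd h2.symm (ne_of_lt hy.1)
      · exact absurd h2 (ne_of_lt hy.2)
  have : (s(v', w'), p) ∈ D.edgeCrossings s(v, w) := ⟨v, w, v', w', rfl, rfl, hcross⟩
  rw [hE] at this
  exact this

end Aux
section Aux2

variable {V : Type*} {G : SimpleGraph V} {h : V → ℝ} (D : ReebDrawing G h) {b t : ℝ}

/-- Sign propagation at the top: if `e₀ = {v,w}` (with `v` at height `t`) is uncrossed,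
then the side of `e₀` on which another edge `{a,c}` (with `a ≠ v` at height `t`) lies at
the middle height is determined by the `x`-order of `a` and `v`. -/
lemma right_iff_top (hbt : b < t)
    (hIcc : ∀ v w : V, G.Adj v w → Set.uIcc (h v) (h w) = Set.Icc b t)
    (hmem : ∀ u : V, h u = b ∨ h u = t)
    {v w a c : V} (hvw : G.Adj v w) (hv : h v = t)
    (hE : D.edgeCrossings s(v, w) = ∅)
    (hac : G.Adj a c) (ha : h a = t) (hne : s(a, c) ≠ s(v, w)) (hav : a ≠ v) :
    (D.curve s(v, w) ((b + t) / 2) < D.curve s(a, c) ((b + t) / 2) ↔ D.x v < D.x a) := by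
  set y0 : ℝ := (b + t) / 2 with hy0def
  have hy0 : y0 ∈ Set.Ioo b t := ⟨by rw [hy0def]; linarith, by rw [hy0def]; linarith⟩
  set φ : ℝ → ℝ := fun y => D.curve s(a, c) y - D.curve s(v, w) y with hφ
  have hcont : Continuous φ :=
    (D.curve_cont _ ((SimpleGraph.mem_edgeSet G).mpr hac)).sub
      (D.curve_cont _ ((SimpleGraph.mem_edgeSet G).mpr hvw))
  have hφt : φ t = D.x a - D.x v := by
    have h1 : D.curve s(a, c) t = D.x a := by rw [← ha]; exact D.curve_end a c hac
    have h2 : D.curve s(v, w) t = D.x v := by rw [← hv]; exact D.curve_end v w hvw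
    simp [hφ, h1, h2]
  have hxav : D.x a ≠ D.x v := by
    intro hx
    apply hav
    apply D.inj
    simp only [Prod.mk.injEq]
    exact ⟨hx, by rw [ha, hv]⟩
  have hφt0 : φ t ≠ 0 := by rw [hφt]; exact sub_ne_zero.mpr hxav
  have hnz : ∀ y ∈ Set.Icc y0 t, φ y ≠ 0 := by
    intro y hy
    rcases eq_or_lt_of_le hy.2 with rfl | hlt
    · exact hφt0
    · exact sub_ne_zero.mpr
        (notouch D hIcc hmem hvw hac hne hE ⟨lt_of_lt_of_le hy0.1 hy.1, hlt⟩)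
  have key : (0 < φ y0 ↔ 0 < φ t) := by
    constructor
    · intro h0
      by_contra hn
      push_neg at hn
      have : (0 : ℝ) ∈ Set.uIcc (φ y0) (φ t) := Set.mem_uIcc.mpr (Or.inr ⟨hn, h0.le⟩)
      obtain ⟨y, hy, hy0'⟩ := intermediate_value_uIcc (Continuous.continuousOn hcont) this
      rw [Set.uIcc_of_le (le_of_lt (lt_of_lt_of_le hy0.2 le_rfl))] at hy
      exact hnz y hy hy0'
    · intro h0
      by_contra hn
      push_neg at hn
      have : (0 : ℝ) ∈ Set.uIcc (φ y0) (φ t) := Set.mem_uIcc.mpr (Or.inl ⟨hn, h0.le⟩)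
      obtain ⟨y, hy, hy0'⟩ := intermediate_value_uIcc (Continuous.continuousOn hcont) this
      rw [Set.uIcc_of_le (le_of_lt (lt_of_lt_of_le hy0.2 le_rfl))] at hy
      exact hnz y hy hy0'
  constructor
  · intro hlt
    have h0 : 0 < φ y0 := sub_pos.mpr hlt
    have := key.mp h0
    rw [hφt] at this
    linarith
  · intro hlt
    have h0 : 0 < φ t := by rw [hφt]; linarith
    have := key.mpr h0
    exact sub_pos.mp this

/-- Sign propagation at the bottom. -/
lemma right_iff_bot (hbt : b < t)
    (hIcc : ∀ v w : V, G.Adj v w → Set.uIcc (h v) (h w) = Set.Icc b t)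
    (hmem : ∀ u : V, h u = b ∨ h u = t)
    {v w a c : V} (hvw : G.Adj v w) (hw : h w = b)
    (hE : D.edgeCrossings s(v, w) = ∅)
    (hac : G.Adj a c) (hc : h c = b) (hne : s(a, c) ≠ s(v, w)) (hcw : c ≠ w) :
    (D.curve s(v, w) ((b + t) / 2) < D.curve s(a, c) ((b + t) / 2) ↔ D.x w < D.x c) := by
  set y0 : ℝ := (b + t) / 2 with hy0def
  have hy0 : y0 ∈ Set.Ioo b t := ⟨by rw [hy0def]; linarith, by rw [hy0def]; linarith⟩
  set φ : ℝ → ℝ := fun y => D.curve s(a, c) y - D.curve s(v, w) y with hφ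
  have hcont : Continuous φ :=
    (D.curve_cont _ ((SimpleGraph.mem_edgeSet G).mpr hac)).sub
      (D.curve_cont _ ((SimpleGraph.mem_edgeSet G).mpr hvw))
  have hφb : φ b = D.x c - D.x w := by
    have h1 : D.curve s(a, c) b = D.x c := by
      rw [← hc, Sym2.eq_swap]; exact D.curve_end c a hac.symm
    have h2 : D.curve s(v, w) b = D.x w := by
      rw [← hw, Sym2.eq_swap]; exact D.curve_end w v hvw.symm
    simp [hφ, h1, h2]
  have hxcw : D.x c ≠ D.x w := by
    intro hx
    apply hcw
    apply D.inj
    simp only [Prod.mk.injEq]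
    exact ⟨hx, by rw [hc, hw]⟩
  have hφb0 : φ b ≠ 0 := by rw [hφb]; exact sub_ne_zero.mpr hxcw
  have hnz : ∀ y ∈ Set.Icc b y0, φ y ≠ 0 := by
    intro y hy
    rcases eq_or_lt_of_le hy.1 with rfl | hlt
    · exact hφb0
    · exact sub_ne_zero.mpr
        (notouch D hIcc hmem hvw hac hne hE ⟨hlt, lt_of_le_of_lt hy.2 hy0.2⟩)
  have key : (0 < φ y0 ↔ 0 < φ b) := by
    constructor
    · intro h0
      by_contra hn
      push_neg at hn
      have : (0 : ℝ) ∈ Set.uIcc (φ b) (φ y0) := Set.mem_uIcc.mpr (Or.inl ⟨hn, h0.le⟩)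
      obtain ⟨y, hy, hy0'⟩ := intermediate_value_uIcc (Continuous.continuousOn hcont) this
      rw [Set.uIcc_of_le hy0.1.le] at hy
      exact hnz y hy hy0'
    · intro h0
      by_contra hn
      push_neg at hn
      have : (0 : ℝ) ∈ Set.uIcc (φ b) (φ y0) := Set.mem_uIcc.mpr (Or.inr ⟨hn, h0.le⟩)
      obtain ⟨y, hy, hy0'⟩ := intermediate_value_uIcc (Continuous.continuousOn hcont) this
      rw [Set.uIcc_of_le hy0.1.le] at hy
      exact hnz y hy hy0'
  constructor
  · intro hlt
    have h0 : 0 < φ y0 := sub_pos.mpr hlt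
    have := key.mp h0
    rw [hφb] at this
    linarith
  · intro hlt
    have h0 : 0 < φ b := by rw [hφb]; linarith
    have := key.mpr h0
    exact sub_pos.mp this

end Aux2
section Aux3

variable {V : Type*} {G : SimpleGraph V} {h : V → ℝ} (D : ReebDrawing G h) {b t : ℝ}

/-- Core version of `share`, assuming `v` is the top endpoint of the uncrossed edge. -/
lemma share' (hbt : b < t)
    (hIcc : ∀ v w : V, G.Adj v w → Set.uIcc (h v) (h w) = Set.Icc b t)
    (hmem : ∀ u : V, h u = b ∨ h u = t)
    (hopp : ∀ v w : V, G.Adj v w → (h v = t ∧ h w = b) ∨ (h v = b ∧ h w = t))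
    {v w a c1 c2 : V} (hvw : G.Adj v w) (hv : h v = t) (hw : h w = b)
    (hE : D.edgeCrossings s(v, w) = ∅)
    (h1 : G.Adj a c1) (h2 : G.Adj a c2) (hav : a ≠ v) (haw : a ≠ w)
    (hne1 : s(a, c1) ≠ s(v, w)) (hne2 : s(a, c2) ≠ s(v, w)) :
    (D.curve s(v, w) ((b + t) / 2) < D.curve s(a, c1) ((b + t) / 2) ↔
      D.curve s(v, w) ((b + t) / 2) < D.curve s(a, c2) ((b + t) / 2)) := by
  have hbt' : b ≠ t := ne_of_lt hbt
  rcases hmem a with haB | haT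
  · -- `a` is a bottom vertex: use the bottom lemma with the edges written `s(cᵢ, a)`
    have e1 : s(c1, a) = s(a, c1) := Sym2.eq_swap
    have e2 : s(c2, a) = s(a, c2) := Sym2.eq_swap
    have r1 := right_iff_bot D hbt hIcc hmem hvw hw hE h1.symm haB (by rw [e1]; exact hne1) haw
    have r2 := right_iff_bot D hbt hIcc hmem hvw hw hE h2.symm haB (by rw [e2]; exact hne2) haw
    rw [e1] at r1
    rw [e2] at r2
    rw [r1, r2]
  · have r1 := right_iff_top D hbt hIcc hmem hvw hv hE h1 haT hne1 hav
    have r2 := right_iff_top D hbt hIcc hmem hvw hv hE h2 haT hne2 hav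
    rw [r1, r2]

/-- Two edges sharing a vertex `a` not on the uncrossed edge `{v,w}` lie on the same
side of `{v,w}` at the middle height. -/
lemma share (hbt : b < t)
    (hIcc : ∀ v w : V, G.Adj v w → Set.uIcc (h v) (h w) = Set.Icc b t)
    (hmem : ∀ u : V, h u = b ∨ h u = t)
    (hopp : ∀ v w : V, G.Adj v w → (h v = t ∧ h w = b) ∨ (h v = b ∧ h w = t))
    {v w a c1 c2 : V} (hvw : G.Adj v w)
    (hE : D.edgeCrossings s(v, w) = ∅)
    (h1 : G.Adj a c1) (h2 : G.Adj a c2) (hav : a ≠ v) (haw : a ≠ w)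
    (hne1 : s(a, c1) ≠ s(v, w)) (hne2 : s(a, c2) ≠ s(v, w)) :
    (D.curve s(v, w) ((b + t) / 2) < D.curve s(a, c1) ((b + t) / 2) ↔
      D.curve s(v, w) ((b + t) / 2) < D.curve s(a, c2) ((b + t) / 2)) := by
  rcases hopp v w hvw with ⟨hv, hw⟩ | ⟨hv, hw⟩
  · exact share' D hbt hIcc hmem hopp hvw hv hw hE h1 h2 hav haw hne1 hne2
  · have hswap : s(v, w) = s(w, v) := Sym2.eq_swap.symm
    rw [hswap] at hE hne1 hne2 ⊢
    exact share' D hbt hIcc hmem hopp hvw.symm hw hv hE h1 h2 haw hav hne1 hne2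

end Aux3
section Aux4

open Fin.CommRing

/-- The `k`-th vertex after `i` along the cycle enumeration. -/
private def pathVert {V : Type*} {n : ℕ} [NeZero n] (e : Fin n ≃ V) (i : Fin n) (k : ℕ) : V :=
  e (i + 1 + (k : Fin n))

/-- The `k`-th edge of the path obtained by removing the edge `{e i, e (i+1)}`. -/
private def pathEdge {V : Type*} {n : ℕ} [NeZero n] (e : Fin n ≃ V) (i : Fin n) (k : ℕ) :
    Sym2 V :=
  s(pathVert e i k, pathVert e i (k + 1))

variable {V : Type*} {G : SimpleGraph V} {h : V → ℝ} (D : ReebDrawing G h) {b t : ℝ}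

lemma chain (hbt : b < t)
    (hIcc : ∀ v w : V, G.Adj v w → Set.uIcc (h v) (h w) = Set.Icc b t)
    (hmem : ∀ u : V, h u = b ∨ h u = t)
    (hopp : ∀ v w : V, G.Adj v w → (h v = t ∧ h w = b) ∨ (h v = b ∧ h w = t))
    {n : ℕ} (hn : 6 ≤ n) (e : Fin n ≃ V) (hcyc : IsCycleEnum G e)
    (i j : Fin n) (hj : (i.val + 1) % n = j.val)
    (hE : D.edgeCrossings s(e i, e j) = ∅)
    {F1 F2 : Sym2 V} (hF1 : F1 ∈ G.edgeSet) (hF2 : F2 ∈ G.edgeSet)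
    (hne1 : F1 ≠ s(e i, e j)) (hne2 : F2 ≠ s(e i, e j)) :
    (D.curve s(e i, e j) ((b + t) / 2) < D.curve F1 ((b + t) / 2) ↔
      D.curve s(e i, e j) ((b + t) / 2) < D.curve F2 ((b + t) / 2)) := by
  haveI : NeZero n := ⟨by omega⟩
  have hval1 : (1 : Fin n).val = 1 := by
    rw [Fin.val_one', Nat.mod_eq_of_lt (by omega)]
  have hvadd : ∀ p : Fin n, (p + 1).val = (p.val + 1) % n := by
    intro p; rw [Fin.val_add, hval1]
  have hfe : ∀ p q : Fin n, p + 1 = q ↔ (p.val + 1) % n = q.val := by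
    intro p q; rw [Fin.ext_iff, hvadd]
  have hcyc' : ∀ p q : Fin n, G.Adj (e p) (e q) ↔ (p + 1 = q ∨ q + 1 = p) := by
    intro p q; rw [hcyc, hfe, hfe]
  have hj' : j = i + 1 := ((hfe i j).mpr hj).symm
  have hneg1 : ((n - 1 : ℕ) : Fin n) = -1 := by
    have h0 : ((n - 1 : ℕ) : Fin n) + 1 = 0 := by
      have h1 : (((n - 1) + 1 : ℕ) : Fin n) = 0 := by
        rw [show n - 1 + 1 = n by omega]; exact Fin.natCast_self n
      rw [Nat.cast_add, Nat.cast_one] at h1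
      exact h1
    exact eq_neg_of_add_eq_zero_left h0
  have hcmp : ∀ k l : ℕ, k < n → l < n → ((k : Fin n) = (l : Fin n) ↔ k = l) := by
    intro k l hk hl
    rw [Fin.ext_iff, Fin.val_cast_of_lt hk, Fin.val_cast_of_lt hl]
  have hcast : ∀ k : ℕ, ((k + 1 : ℕ) : Fin n) = (k : Fin n) + 1 := by
    intro k; push_cast; ring
  -- basic facts about the path
  have hPinj : ∀ k l : ℕ, k < n → l < n → pathVert e i k = pathVert e i l → k = l := by
    intro k l hk hl hkl
    have h1 : (k : Fin n) = (l : Fin n) := add_left_cancel (e.injective hkl)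
    exact (hcmp k l hk hl).mp h1
  have hPi : pathVert e i (n - 1) = e i := by
    show e _ = e i
    congr 1
    rw [hneg1]; ring
  have hPj : pathVert e i 0 = e j := by
    show e _ = e j
    rw [hj']
    congr 1
    push_cast; ring
  have hPadj : ∀ k : ℕ, G.Adj (pathVert e i k) (pathVert e i (k + 1)) := by
    intro k
    refine (hcyc' _ _).mpr (Or.inl ?_)
    rw [hcast]; ring
  have hEadj : G.Adj (e i) (e j) := (hcyc' i j).mpr (Or.inl hj'.symm)
  -- interior vertices of the path avoid the endpoints of the removed edge
  have hint : ∀ k : ℕ, 1 ≤ k → k ≤ n - 2 →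
      pathVert e i k ≠ e i ∧ pathVert e i k ≠ e j := by
    intro k h1 h2
    constructor
    · rw [← hPi]; intro hh
      have := hPinj k (n - 1) (by omega) (by omega) hh
      omega
    · rw [← hPj]; intro hh
      have := hPinj k 0 (by omega) (by omega) hh
      omega
  -- the path edges are distinct from the removed edge
  have hEdec : s(e i, e j) = s(pathVert e i (n-1), pathVert e i 0) := by rw [hPi, hPj]
  have hfne : ∀ k : ℕ, k ≤ n - 2 → pathEdge e i k ≠ s(e i, e j) := by
    intro k hk heq
    rw [hEdec] at heq
    rw [pathEdge, Sym2.eq_iff] at heq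
    rcases heq with ⟨ha, hb⟩ | ⟨ha, hb⟩
    · have := hPinj k (n - 1) (by omega) (by omega) ha
      omega
    · have h1 := hPinj k 0 (by omega) (by omega) ha
      have h2 : (((k + 1 : ℕ)) : Fin n) = ((n - 1 : ℕ) : Fin n) :=
        add_left_cancel (e.injective hb)
      have := (hcmp (k + 1) (n - 1) (by omega) (by omega)).mp h2
      omega
  -- every edge other than the removed one is a path edge
  have key : ∀ a c : V, G.Adj a c → (e.symm a) + 1 = e.symm c → s(a, c) ≠ s(e i, e j) →
      ∃ k, k ≤ n - 2 ∧ s(a, c) = pathEdge e i k := by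
    intro a c hac hpq hne
    set p := e.symm a with hp
    set k := (p - (i + 1)).val with hkdef
    have hkc : ((k : ℕ) : Fin n) = p - (i + 1) := Fin.cast_val_eq_self _
    have hUk : pathVert e i k = a := by
      show e _ = a
      rw [hkc, show i + 1 + (p - (i + 1)) = p by ring, hp, Equiv.apply_symm_apply]
    have hUk1 : pathVert e i (k + 1) = c := by
      show e _ = c
      rw [hcast, hkc, show i + 1 + (p - (i + 1) + 1) = p + 1 by ring, hpq,
        Equiv.apply_symm_apply]
    refine ⟨k, ?_, by rw [pathEdge, hUk, hUk1]⟩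
    by_contra hk2
    have hkn : k < n := (p - (i + 1)).isLt
    have hk : k = n - 1 := by omega
    apply hne
    rw [← hUk, ← hUk1, hk, hPi, show n - 1 + 1 = n by omega]
    have hPn : pathVert e i n = e j := by
      show e _ = e j
      rw [Fin.natCast_self, hj']
      congr 1
      ring
    rw [hPn]
  have hrepr : ∀ F ∈ G.edgeSet, F ≠ s(e i, e j) →
      ∃ k, k ≤ n - 2 ∧ F = pathEdge e i k := by
    intro F hF hne
    induction F using Sym2.ind with
    | _ a c =>
      have hac : G.Adj a c := (SimpleGraph.mem_edgeSet G).mp hF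
      have hac' : G.Adj (e (e.symm a)) (e (e.symm c)) := by
        rwa [Equiv.apply_symm_apply, Equiv.apply_symm_apply]
      rcases (hcyc' (e.symm a) (e.symm c)).mp hac' with hpq | hpq
      · exact key a c hac hpq hne
      · obtain ⟨k, hk, heq⟩ := key c a hac.symm hpq (by rw [Sym2.eq_swap]; exact hne)
        exact ⟨k, hk, by rw [Sym2.eq_swap]; exact heq⟩
  -- all path edges are on the same side of the removed edge at the middle height
  have main : ∀ k : ℕ, k ≤ n - 2 →
      (D.curve s(e i, e j) ((b + t) / 2) < D.curve (pathEdge e i 0) ((b + t) / 2) ↔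
        D.curve s(e i, e j) ((b + t) / 2) < D.curve (pathEdge e i k) ((b + t) / 2)) := by
    intro k hk
    induction k with
    | zero => exact Iff.rfl
    | succ k IH =>
      have IH' := IH (by omega)
      rw [IH']
      have h1 : G.Adj (pathVert e i (k + 1)) (pathVert e i k) := (hPadj k).symm
      have h2 : G.Adj (pathVert e i (k + 1)) (pathVert e i (k + 2)) := hPadj (k + 1)
      have hint' := hint (k + 1) (by omega) hk
      have hf1 : s(pathVert e i (k + 1), pathVert e i k) = pathEdge e i k := Sym2.eq_swap
      have hf2 : s(pathVert e i (k + 1), pathVert e i (k + 2)) = pathEdge e i (k + 1) := rfl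
      have hstep := share D hbt hIcc hmem hopp hEadj hE h1 h2 hint'.1 hint'.2
        (by rw [hf1]; exact hfne k (by omega)) (by rw [hf2]; exact hfne (k + 1) hk)
      rw [hf1, hf2] at hstep
      exact hstep
  obtain ⟨k1, hk1, rfl⟩ := hrepr F1 hF1 hne1
  obtain ⟨k2, hk2, rfl⟩ := hrepr F2 hF2 hne2
  exact (main k1 hk1).symm.trans (main k2 hk2)

end Aux4
section Aux5

variable {V : Type*} {G : SimpleGraph V} {h : V → ℝ} (D : ReebDrawing G h) {b t : ℝ}

lemma chain_sym (hbt : b < t)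
    (hIcc : ∀ v w : V, G.Adj v w → Set.uIcc (h v) (h w) = Set.Icc b t)
    (hmem : ∀ u : V, h u = b ∨ h u = t)
    (hopp : ∀ v w : V, G.Adj v w → (h v = t ∧ h w = b) ∨ (h v = b ∧ h w = t))
    {n : ℕ} (hn : 6 ≤ n) (e : Fin n ≃ V) (hcyc : IsCycleEnum G e)
    {E F1 F2 : Sym2 V} (hEe : E ∈ G.edgeSet) (hE : D.edgeCrossings E = ∅)
    (hF1 : F1 ∈ G.edgeSet) (hF2 : F2 ∈ G.edgeSet)
    (hne1 : F1 ≠ E) (hne2 : F2 ≠ E) :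
    (D.curve E ((b + t) / 2) < D.curve F1 ((b + t) / 2) ↔
      D.curve E ((b + t) / 2) < D.curve F2 ((b + t) / 2)) := by
  induction E using Sym2.ind with
  | _ a c =>
    have hac : G.Adj a c := (SimpleGraph.mem_edgeSet G).mp hEe
    have ha : e (e.symm a) = a := Equiv.apply_symm_apply e a
    have hc : e (e.symm c) = c := Equiv.apply_symm_apply e c
    have hadj' : G.Adj (e (e.symm a)) (e (e.symm c)) := by rwa [ha, hc]
    rcases (hcyc (e.symm a) (e.symm c)).mp hadj' with hp | hp
    · have := chain D hbt hIcc hmem hopp hn e hcyc (e.symm a) (e.symm c) hp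
        (by rwa [ha, hc]) hF1 hF2 (by rwa [ha, hc]) (by rwa [ha, hc])
      rwa [ha, hc] at this
    · have hsw : s(a, c) = s(c, a) := Sym2.eq_swap
      rw [hsw] at hE hne1 hne2 ⊢
      have := chain D hbt hIcc hmem hopp hn e hcyc (e.symm c) (e.symm a) hp
        (by rwa [hc, ha]) hF1 hF2 (by rwa [hc, ha]) (by rwa [hc, ha])
      rwa [hc, ha] at this

lemma notouch_sym (hbt : b < t)
    (hIcc : ∀ v w : V, G.Adj v w → Set.uIcc (h v) (h w) = Set.Icc b t)
    (hmem : ∀ u : V, h u = b ∨ h u = t)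
    {E F : Sym2 V} (hEe : E ∈ G.edgeSet) (hFe : F ∈ G.edgeSet)
    (hne : F ≠ E) (hE : D.edgeCrossings E = ∅) :
    D.curve F ((b + t) / 2) ≠ D.curve E ((b + t) / 2) := by
  induction E using Sym2.ind with
  | _ v w =>
    induction F using Sym2.ind with
    | _ v' w' =>
      exact notouch D hIcc hmem ((SimpleGraph.mem_edgeSet G).mp hEe)
        ((SimpleGraph.mem_edgeSet G).mp hFe) hne hE
        ⟨by linarith, by linarith⟩

end Aux5
/-- Let `(G, h)` be a Reeb graph such that `G` is a cycle with
`n = 2 * m` vertices (`n` even, `n ≥ 6`) whose heights alternate along the cycle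
between two values `b < t`. Then in every drawing of `(G, h)`, at most two edges of
the cycle are involved in no crossing. -/
theorem alternating_cycle_at_most_two_uncrossed_edges
    {V : Type*} [Fintype V] (G : SimpleGraph V) (h : V → ℝ)
    (m : ℕ) (hm : 3 ≤ m) (e : Fin (2 * m) ≃ V) (hcyc : IsCycleEnum G e)
    (b t : ℝ) (hbt : b < t)
    (hh : ∀ i : Fin (2 * m), h (e i) = if i.val % 2 = 0 then t else b) :
    ∀ D : ReebDrawing G h,
      {e₀ ∈ G.edgeSet | D.edgeCrossings e₀ = ∅}.encard ≤ 2 := by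
  have hn : 6 ≤ 2 * m := by omega
  have hmem : ∀ u : V, h u = b ∨ h u = t := by
    intro u
    have := hh (e.symm u)
    rw [Equiv.apply_symm_apply] at this
    split_ifs at this
    · right; exact this
    · left; exact this
  have hopp : ∀ v w : V, G.Adj v w → (h v = t ∧ h w = b) ∨ (h v = b ∧ h w = t) := by
    intro v w hvw
    have ha : e (e.symm v) = v := Equiv.apply_symm_apply e v
    have hc : e (e.symm w) = w := Equiv.apply_symm_apply e w
    have hadj' : G.Adj (e (e.symm v)) (e (e.symm w)) := by rwa [ha, hc]
    have hdvd : (2 : ℕ) ∣ 2 * m := ⟨m, rfl⟩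
    set i := e.symm v with hi
    set j := e.symm w with hjj
    have hpar : i.val % 2 ≠ j.val % 2 := by
      rcases (hcyc i j).mp hadj' with hp | hp
      · have h2 : j.val % 2 = (i.val + 1) % 2 := by
          rw [← hp]; exact Nat.mod_mod_of_dvd _ hdvd
        omega
      · have h2 : i.val % 2 = (j.val + 1) % 2 := by
          rw [← hp]; exact Nat.mod_mod_of_dvd _ hdvd
        omega
    have hv' : h v = if i.val % 2 = 0 then t else b := by rw [← ha]; exact hh i
    have hw' : h w = if j.val % 2 = 0 then t else b := by rw [← hc]; exact hh j
    by_cases hie : i.val % 2 = 0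
    · left
      rw [hv', if_pos hie, hw', if_neg (by omega)]
      exact ⟨rfl, rfl⟩
    · right
      rw [hv', if_neg hie, hw', if_pos (by omega)]
      exact ⟨rfl, rfl⟩
  have hIcc : ∀ v w : V, G.Adj v w → Set.uIcc (h v) (h w) = Set.Icc b t := by
    intro v w hvw
    rcases hopp v w hvw with ⟨hv, hw⟩ | ⟨hv, hw⟩
    · rw [hv, hw, Set.uIcc_comm, Set.uIcc_of_le hbt.le]
    · rw [hv, hw, Set.uIcc_of_le hbt.le]
  intro D
  by_contra hcon
  push_neg at hcon
  obtain ⟨E1, hE1, E2, hE2, E3, hE3, h12, h13, h23⟩ := three_distinct hcon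
  obtain ⟨hE1e, hE1c⟩ := hE1
  obtain ⟨hE2e, hE2c⟩ := hE2
  obtain ⟨hE3e, hE3c⟩ := hE3
  have mid : ∀ E F1 F2 : Sym2 V, E ∈ G.edgeSet → D.edgeCrossings E = ∅ →
      F1 ∈ G.edgeSet → F2 ∈ G.edgeSet → F1 ≠ E → F2 ≠ E →
      D.curve F1 ((b + t) / 2) < D.curve E ((b + t) / 2) →
      D.curve E ((b + t) / 2) < D.curve F2 ((b + t) / 2) → False := by
    intro E F1 F2 hEe hEc hF1e hF2e hne1 hne2 l1 l2
    have := (chain_sym D hbt hIcc hmem hopp hn e hcyc hEe hEc hF1e hF2e hne1 hne2).mpr l2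
    exact lt_asymm l1 this
  have d12 : D.curve E1 ((b + t) / 2) ≠ D.curve E2 ((b + t) / 2) :=
    notouch_sym D hbt hIcc hmem hE2e hE1e h12 hE2c
  have d13 : D.curve E1 ((b + t) / 2) ≠ D.curve E3 ((b + t) / 2) :=
    notouch_sym D hbt hIcc hmem hE3e hE1e h13 hE3c
  have d23 : D.curve E2 ((b + t) / 2) ≠ D.curve E3 ((b + t) / 2) :=
    notouch_sym D hbt hIcc hmem hE3e hE2e h23 hE3c
  rcases lt_trichotomy (D.curve E1 ((b + t) / 2)) (D.curve E2 ((b + t) / 2)) with g12 | g12 | g12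
  · rcases lt_trichotomy (D.curve E2 ((b + t) / 2)) (D.curve E3 ((b + t) / 2)) with g23 | g23 | g23
    · exact mid E2 E1 E3 hE2e hE2c hE1e hE3e h12 (Ne.symm h23) g12 g23
    · exact d23 g23
    · rcases lt_trichotomy (D.curve E1 ((b + t) / 2)) (D.curve E3 ((b + t) / 2)) with g13 | g13 | g13
      · exact mid E3 E1 E2 hE3e hE3c hE1e hE2e h13 h23 g13 g23
      · exact d13 g13
      · exact mid E1 E3 E2 hE1e hE1c hE3e hE2e (Ne.symm h13) (Ne.symm h12) g13 g12
  · exact d12 g12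
  · rcases lt_trichotomy (D.curve E1 ((b + t) / 2)) (D.curve E3 ((b + t) / 2)) with g13 | g13 | g13
    · exact mid E1 E2 E3 hE1e hE1c hE2e hE3e (Ne.symm h12) (Ne.symm h13) g12 g13
    · exact d13 g13
    · rcases lt_trichotomy (D.curve E2 ((b + t) / 2)) (D.curve E3 ((b + t) / 2)) with g23 | g23 | g23
      · exact mid E3 E2 E1 hE3e hE3c hE2e hE1e h23 h13 g23 g13
      · exact d23 g23
      · exact mid E2 E3 E1 hE2e hE2c hE3e hE1e (Ne.symm h23) h12 g23 g12
end
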